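/- arXiv:2405.06355 — 11 statements merged into one kernel-verified Lean document; each statement's English description precedes it below -/
import Mathlib

section
/- Let η > 0 and let n < m be positive odd coprime integers. If y : [0,∞) → ℝ is differentiable and satisfies y'(t) = −η·sign(y(t))·|y(t)|^{n/m} for all t ≥ 0, then |y| is nonincreasing on [0,∞), and y(t) = 0 for all t ≥ t_s, where t_s = (m/(η·(m−n)))·|y(0)|^{(m−n)/m}. -/
open Real Set

private lemma mul_sign_eq_abs (x : ℝ) : x * Real.sign x = |x| := by
  rcases lt_trichotomy x 0 with h | h | h
  · simp [Real.sign_of_neg h, abs_of_neg h]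
  · simp [h]
  · simp [Real.sign_of_pos h, abs_of_pos h]

/-- Scalar finite-time-convergence lemma underlying Proposition 1:
if `y' = -η·sign(y)·|y|^{n/m}` on `[0,∞)` (the real `m`-th root of `y^n`),
then `|y|` is nonincreasing and `y` vanishes after
`t_s = (m/(η(m-n)))·|y 0|^{(m-n)/m}`. -/
theorem stmt0 (η : ℝ) (hη : 0 < η) (n m : ℕ) (hn : 0 < n) (hnm : n < m)
    (hodd_n : Odd n) (hodd_m : Odd m) (hcop : Nat.Coprime n m)
    (y : ℝ → ℝ)
    (hy : ∀ t, 0 ≤ t → HasDerivAt y (-η * (Real.sign (y t) * |y t| ^ ((n : ℝ) / m))) t) :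
    AntitoneOn (fun t => |y t|) (Ici 0) ∧
      ∀ t, (m : ℝ) / (η * ((m : ℝ) - n)) * |y 0| ^ (((m : ℝ) - n) / m) ≤ t → y t = 0 := by
  have hm0 : (0:ℝ) < m := by exact_mod_cast (hn.trans hnm)
  have hmn : (0:ℝ) < (m:ℝ) - n := by
    have : (n:ℝ) < m := by exact_mod_cast hnm
    linarith
  set β : ℝ := ((m:ℝ) - n) / m with hβdef
  have hβpos : 0 < β := div_pos hmn hm0
  have hycont : ∀ x ∈ Ici (0:ℝ), ContinuousWithinAt y (Ici 0) x :=
    fun x hx => (hy x hx).continuousAt.continuousWithinAt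
  -- Part A : y² is antitone
  have hsq : AntitoneOn (fun t => (y t)^2) (Ici 0) := by
    apply antitoneOn_of_deriv_nonpos (convex_Ici 0)
    · exact fun x hx => ((hycont x hx).pow 2)
    · rw [interior_Ici]
      exact fun x hx => ((hy x (le_of_lt hx)).pow 2).differentiableAt.differentiableWithinAt
    · rw [interior_Ici]
      intro x hx
      have hd := (hy x (le_of_lt hx)).pow 2
      change deriv (y ^ 2) x ≤ 0
      rw [hd.deriv]
      have h1 : y x * Real.sign (y x) = |y x| := mul_sign_eq_abs (y x)
      have h2 : (0:ℝ) ≤ |y x| ^ ((n:ℝ)/m) := Real.rpow_nonneg (abs_nonneg _) _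
      have : ((2:ℕ):ℝ) * y x ^ (2-1) * (-η * (Real.sign (y x) * |y x| ^ ((n : ℝ) / m)))
          = -(2 * η * ((y x * Real.sign (y x)) * |y x| ^ ((n:ℝ)/m))) := by push_cast; ring
      rw [this, h1]
      have : 0 ≤ 2 * η * (|y x| * |y x| ^ ((n:ℝ)/m)) := by positivity
      linarith
  have hA : AntitoneOn (fun t => |y t|) (Ici 0) := by
    intro a ha b hb hab
    have h := hsq ha hb hab
    simp only at h ⊢
    nlinarith [abs_nonneg (y a), abs_nonneg (y b), sq_abs (y a), sq_abs (y b)]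
  refine ⟨hA, ?_⟩
  set T : ℝ := (m : ℝ) / (η * ((m : ℝ) - n)) * |y 0| ^ (((m : ℝ) - n) / m) with hTdef
  have hT0 : 0 ≤ T := by
    apply mul_nonneg
    · positivity
    · exact Real.rpow_nonneg (abs_nonneg _) _
  intro t ht
  by_cases hex : ∃ s ∈ Icc (0:ℝ) T, y s = 0
  · obtain ⟨s, hs, hys⟩ := hex
    have h1 : |y t| ≤ |y s| := hA hs.1 (le_trans hT0 ht) (hs.2.trans ht)
    rw [hys] at h1
    simpa using abs_nonpos_iff.mp (by simpa using h1)
  · exfalso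
    push_neg at hex
    -- g = |y|^β + ηβ t has zero derivative on [0,T]
    set g : ℝ → ℝ := fun t => |y t| ^ β + η * β * t with hgdef
    have hgderiv : ∀ x ∈ Ico (0:ℝ) T, HasDerivWithinAt g 0 (Ici x) x := by
      intro x hx
      have hne : y x ≠ 0 := hex x ⟨hx.1, hx.2.le⟩
      have habs : |y x| ≠ 0 := abs_ne_zero.mpr hne
      have hd := hy x hx.1
      have h1 : HasDerivAt (fun t => |y t|)
          ((SignType.sign (y x) : ℝ) * (-η * (Real.sign (y x) * |y x| ^ ((n : ℝ) / m)))) x :=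
        (hasDerivAt_abs hne).comp x hd
      have h2 := (Real.hasDerivAt_rpow_const (p := β) (Or.inl habs)).comp x h1
      have hs1 : (SignType.sign (y x) : ℝ) * Real.sign (y x) = 1 := by
        rcases hne.lt_or_gt with h | h
        · simp [Real.sign_of_neg h, h]
        · simp [Real.sign_of_pos h, h]
      have hr : |y x| ^ (β - 1) * |y x| ^ ((n:ℝ)/m) = 1 := by
        rw [← Real.rpow_add (abs_pos.mpr hne)]
        have : β - 1 + (n:ℝ)/m = 0 := by
          rw [hβdef]; field_simp; ring
        rw [this, Real.rpow_zero]
      have hval : β * |y x| ^ (β - 1) *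
          ((SignType.sign (y x) : ℝ) * (-η * (Real.sign (y x) * |y x| ^ ((n : ℝ) / m))))
          = -(η * β) := by
        calc β * |y x| ^ (β - 1) *
            ((SignType.sign (y x) : ℝ) * (-η * (Real.sign (y x) * |y x| ^ ((n : ℝ) / m))))
            = -(η * β) * ((|y x| ^ (β - 1) * |y x| ^ ((n:ℝ)/m)) *
              ((SignType.sign (y x) : ℝ) * Real.sign (y x))) := by ring
          _ = -(η * β) := by rw [hr, hs1]; ring
      rw [hval] at h2
      have hlin : HasDerivAt (fun t : ℝ => η * β * t) (η * β) x := by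
        simpa using (hasDerivAt_id x).const_mul (η * β)
      have := h2.add hlin
      rw [neg_add_cancel] at this
      exact this.hasDerivWithinAt
    have hgcont : ContinuousOn g (Icc 0 T) := by
      apply ContinuousOn.add
      · apply ContinuousOn.rpow_const
        · have hyc : ContinuousOn y (Icc 0 T) :=
            fun x hx => (hy x hx.1).continuousAt.continuousWithinAt
          exact hyc.abs
        · exact fun x _ => Or.inr hβpos.le
      · exact (continuous_const.mul continuous_id).continuousOn
    have hconst := constant_of_has_deriv_right_zero hgcont hgderiv T ⟨hT0, le_rfl⟩
    -- g T = g 0, i.e. |y T|^β + ηβT = |y 0|^β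
    have hgT : |y T| ^ β + η * β * T = |y 0| ^ β := by
      have : g T = g 0 := hconst
      simp only [hgdef] at this
      linarith [this]
    have hEβT : η * β * T = |y 0| ^ β := by
      rw [hTdef, hβdef]
      field_simp
    have hzero : |y T| ^ β = 0 := by
      rw [hEβT] at hgT; linarith
    have hposT : 0 < |y T| ^ β :=
      Real.rpow_pos_of_pos (abs_pos.mpr (hex T ⟨hT0, le_rfl⟩)) β
    linarith
end

section
/- (Proposition 1, Case 1.) Suppose d, χ, χ^p : [0,∞) → ℝ are differentiable, d'(t) = V_g·sin(χ(t) − χ^p(t)), and χ'(t) = α·(χ^c(t) − χ(t)). Define χ^d(t) = χ^p(t) − arctan(k₃·d(t)³) + π/2 and χ̃ = χ − χ^d, assume χ̃(0) > 0, and let the command be χ^c = χ + χ^p'/α − (1/α)·(3k₃·d²/(1 + (k₃·d³)²))·V_g·sin(χ − χ^p) − (η/α)·χ̃^{n/m}. Then χ̃ satisfies χ̃'(t) = −η·χ̃(t)^{n/m} for all t ≥ 0, χ̃ is monotonically nonincreasing, and χ̃(t) = 0 for all t ≥ t_s, where t_s = (m/(η·(m−n)))·χ̃(0)^{(m−n)/m}.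 -/
open Real Set

/-- Proposition 1 (Case 1 of the switched vector field, side ρ = +1):
with `χ^d = χ^p - arctan(k₃ d³) + π/2`, `χ̃ = χ - χ^d`, `χ̃(0) > 0`, and the stated
command `χ^c`, the course error obeys `χ̃' = -η·χ̃^{n/m}`, is nonincreasing, and
vanishes after `t_s = (m/(η(m-n)))·χ̃(0)^{(m-n)/m}`. -/
theorem stmt2 (Vg α k₃ η : ℝ) (hVg : 0 < Vg) (hα : 0 < α) (hk₃ : 0 < k₃) (hη : 0 < η)
    (n m : ℕ) (hn : 0 < n) (hnm : n < m) (hodd_n : Odd n) (hodd_m : Odd m)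
    (hcop : Nat.Coprime n m)
    (d χ χp χp' χc χd : ℝ → ℝ)
    (hd : ∀ t, 0 ≤ t → HasDerivAt d (Vg * Real.sin (χ t - χp t)) t)
    (hχp : ∀ t, 0 ≤ t → HasDerivAt χp (χp' t) t)
    (hχ : ∀ t, 0 ≤ t → HasDerivAt χ (α * (χc t - χ t)) t)
    (hχd : χd = fun t => χp t - Real.arctan (k₃ * d t ^ 3) + π / 2)
    (h0 : 0 < χ 0 - χd 0)
    (hχc : χc = fun t => χ t + χp' t / α
        - (1 / α) * (3 * k₃ * d t ^ 2 / (1 + (k₃ * d t ^ 3) ^ 2)) * Vg * Real.sin (χ t - χp t)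
        - (η / α) * (Real.sign (χ t - χd t) * |χ t - χd t| ^ ((n : ℝ) / m))) :
    (∀ t, 0 ≤ t → HasDerivAt (fun s => χ s - χd s)
        (-η * (Real.sign (χ t - χd t) * |χ t - χd t| ^ ((n : ℝ) / m))) t) ∧
      AntitoneOn (fun t => χ t - χd t) (Ici 0) ∧
      ∀ t, (m : ℝ) / (η * ((m : ℝ) - n)) * (χ 0 - χd 0) ^ (((m : ℝ) - n) / m) ≤ t →
        χ t - χd t = 0 := by
  have hm0 : (0:ℝ) < m := by exact_mod_cast hn.trans hnm
  have hnm' : (n:ℝ) < m := by exact_mod_cast hnm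
  have hmn : (0:ℝ) < (m:ℝ) - n := by linarith
  -- derivative of χd
  have hχd' : ∀ t, 0 ≤ t → HasDerivAt χd
      (χp' t - (k₃ * (3 * d t ^ 2 * (Vg * Real.sin (χ t - χp t))))
        / (1 + (k₃ * d t ^ 3) ^ 2)) t := by
    intro t ht
    rw [hχd]
    have h1 : HasDerivAt (fun s => k₃ * d s ^ 3)
        (k₃ * (3 * d t ^ 2 * (Vg * Real.sin (χ t - χp t)))) t := by
      simpa using ((hd t ht).pow 3).const_mul k₃
    have h2 : HasDerivAt (fun s => Real.arctan (k₃ * d s ^ 3))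
        (1 / (1 + (k₃ * d t ^ 3) ^ 2) *
          (k₃ * (3 * d t ^ 2 * (Vg * Real.sin (χ t - χp t))))) t :=
      h1.arctan
    have h3 := ((hχp t ht).sub h2).add_const (π / 2)
    convert h3 using 1
    all_goals try rfl
    ring
  -- derivative of the error
  have hder : ∀ t, 0 ≤ t → HasDerivAt (fun s => χ s - χd s)
      (-η * (Real.sign (χ t - χd t) * |χ t - χd t| ^ ((n : ℝ) / m))) t := by
    intro t ht
    have h4 := (hχ t ht).sub (hχd' t ht)
    convert h4 using 1
    all_goals try rfl
    simp only [hχc]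
    have hu : (0:ℝ) < 1 + (k₃ * d t ^ 3) ^ 2 := by positivity
    field_simp
    ring
  have hcont : ContinuousOn (fun s => χ s - χd s) (Ici 0) :=
    fun t ht => (hder t ht).continuousAt.continuousWithinAt
  -- nonnegativity of the error
  have hnonneg : ∀ t, 0 ≤ t → 0 ≤ χ t - χd t := by
    intro t0 ht0
    by_contra hneg
    push_neg at hneg
    set S : Set ℝ := Icc 0 t0 ∩ (fun t => χ t - χd t) ⁻¹' Ici 0 with hS
    have hSne : S.Nonempty := ⟨0, ⟨le_refl 0, ht0⟩, h0.le⟩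
    have hSbdd : BddAbove S := ⟨t0, fun x hx => hx.1.2⟩
    have hScl : IsClosed S :=
      (hcont.mono (fun x hx => hx.1)).preimage_isClosed_of_isClosed isClosed_Icc isClosed_Ici
    set s := sSup S with hs
    have hsS : s ∈ S := hScl.closure_subset (csSup_mem_closure hSne hSbdd)
    have hsge : (0:ℝ) ≤ χ s - χd s := hsS.2
    have hs0 : 0 ≤ s := hsS.1.1
    have hst0le : s ≤ t0 := hsS.1.2
    have hst0 : s < t0 := by
      rcases lt_or_eq_of_le hst0le with h | h
      · exact h
      · exfalso; rw [h] at hsge; exact absurd hneg (not_lt.mpr hsge)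
    have hneg' : ∀ u ∈ Ioc s t0, χ u - χd u < 0 := by
      intro u hu
      by_contra h
      push_neg at h
      have huS : u ∈ S := ⟨⟨hs0.trans hu.1.le, hu.2⟩, h⟩
      exact absurd (le_csSup hSbdd huS) (not_le.mpr hu.1)
    have hes : χ s - χd s = 0 := by
      rcases lt_or_eq_of_le hsge with hpos | h
      · exfalso
        have hcA : ContinuousAt (fun t => χ t - χd t) s := (hder s hs0).continuousAt
        have hmem : (fun t => χ t - χd t) ⁻¹' Ioi 0 ∈ nhdsWithin s (Ioi s) :=
          mem_nhdsWithin_of_mem_nhds (hcA (Ioi_mem_nhds hpos))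
        have hmem2 : Ioc s t0 ∈ nhdsWithin s (Ioi s) :=
          Ioc_mem_nhdsGT_of_mem ⟨le_refl s, hst0⟩
        obtain ⟨u, hu1, hu2⟩ := Filter.nonempty_of_mem (Filter.inter_mem hmem hmem2)
        exact absurd (hneg' u hu2) (not_lt.mpr (le_of_lt hu1))
      · exact h.symm
    have hmono : StrictMonoOn (fun t => χ t - χd t) (Icc s t0) := by
      apply strictMonoOn_of_deriv_pos (convex_Icc _ _)
      · exact hcont.mono (fun x hx => hs0.trans hx.1)
      · intro x hx
        rw [interior_Icc] at hx
        have hx0 : 0 ≤ x := hs0.trans hx.1.le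
        have hxneg : χ x - χd x < 0 := hneg' x ⟨hx.1, hx.2.le⟩
        rw [(hder x hx0).deriv, Real.sign_of_neg hxneg]
        have habs : 0 < |χ x - χd x| ^ ((n : ℝ) / m) :=
          Real.rpow_pos_of_pos (abs_pos.mpr hxneg.ne) _
        nlinarith
    have := hmono ⟨le_refl s, hst0le⟩ ⟨hst0le, le_refl t0⟩ hst0
    simp only [hes] at this
    linarith
  -- monotonicity
  have hanti : AntitoneOn (fun t => χ t - χd t) (Ici 0) := by
    apply antitoneOn_of_deriv_nonpos (convex_Ici 0) hcont
    · intro x hx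
      rw [interior_Ici] at hx
      exact ((hder x hx.le).differentiableAt).differentiableWithinAt
    · intro x hx
      rw [interior_Ici] at hx
      rw [(hder x hx.le).deriv]
      have he := hnonneg x hx.le
      have hsgn : 0 ≤ Real.sign (χ x - χd x) := by
        rcases lt_or_eq_of_le he with h | h
        · rw [Real.sign_of_pos h]; norm_num
        · rw [← h, Real.sign_zero]
      have habs : (0:ℝ) ≤ |χ x - χd x| ^ ((n : ℝ) / m) :=
        Real.rpow_nonneg (abs_nonneg _) _
      have : 0 ≤ Real.sign (χ x - χd x) * |χ x - χd x| ^ ((n : ℝ) / m) :=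
        mul_nonneg hsgn habs
      nlinarith
  refine ⟨hder, hanti, ?_⟩
  -- finite-time convergence
  intro t1 ht1
  set β : ℝ := ((m:ℝ) - n) / m with hβ
  have hβpos : 0 < β := div_pos hmn hm0
  have hc : 0 < η * β := mul_pos hη hβpos
  have hA : 0 < (χ 0 - χd 0) ^ β := Real.rpow_pos_of_pos h0 _
  have hts_pos : 0 < (m:ℝ) / (η * ((m:ℝ) - n)) * (χ 0 - χd 0) ^ β := by positivity
  have ht1_0 : 0 ≤ t1 := le_trans hts_pos.le ht1
  have hge := hnonneg t1 ht1_0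
  refine le_antisymm ?_ hge
  by_contra hpos
  push_neg at hpos
  have hposall : ∀ x ∈ Icc (0:ℝ) t1, 0 < χ x - χd x := by
    intro x hx
    exact lt_of_lt_of_le hpos (hanti hx.1 ht1_0 hx.2)
  set g : ℝ → ℝ := fun t => (χ t - χd t) ^ β + (η * β) * t with hg
  have hgder : ∀ x ∈ Icc (0:ℝ) t1, HasDerivAt g 0 x := by
    intro x hx
    have hpx := hposall x hx
    have h1 := ((hder x hx.1).rpow_const (p := β) (Or.inl hpx.ne'))
    have h2 := h1.add ((hasDerivAt_id x).const_mul (η * β))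
    convert h2 using 1
    all_goals try rfl
    rw [Real.sign_of_pos hpx, abs_of_pos hpx]
    have key : (χ x - χd x) ^ ((n:ℝ)/m) * (χ x - χd x) ^ (β - 1) = 1 := by
      rw [← Real.rpow_add hpx]
      have : (n:ℝ)/m + (β - 1) = 0 := by
        rw [hβ]; field_simp; ring
      rw [this, Real.rpow_zero]
    linear_combination (η * β) * key
  have hgc : ContinuousOn g (Icc 0 t1) :=
    fun x hx => (hgder x hx).continuousAt.continuousWithinAt
  have hgd : DifferentiableOn ℝ g (interior (Icc 0 t1)) :=
    fun x hx => ((hgder x (interior_subset hx)).differentiableAt).differentiableWithinAt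
  have h1 : AntitoneOn g (Icc 0 t1) :=
    antitoneOn_of_deriv_nonpos (convex_Icc _ _) hgc hgd
      (fun x hx => le_of_eq (hgder x (interior_subset hx)).deriv)
  have h2 : MonotoneOn g (Icc 0 t1) :=
    monotoneOn_of_deriv_nonneg (convex_Icc _ _) hgc hgd
      (fun x hx => ge_of_eq (hgder x (interior_subset hx)).deriv)
  have hmem0 : (0:ℝ) ∈ Icc (0:ℝ) t1 := ⟨le_refl 0, ht1_0⟩
  have hmem1 : t1 ∈ Icc (0:ℝ) t1 := ⟨ht1_0, le_refl t1⟩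
  have heq : g t1 = g 0 :=
    le_antisymm (h1 hmem0 hmem1 ht1_0) (h2 hmem0 hmem1 ht1_0)
  have hg0 : g 0 = (χ 0 - χd 0) ^ β := by simp [hg]
  have hgt1 : g t1 = (χ t1 - χd t1) ^ β + (η * β) * t1 := rfl
  have hBpos : 0 < (χ t1 - χd t1) ^ β := Real.rpow_pos_of_pos hpos _
  have hcts : (η * β) * ((m:ℝ) / (η * ((m:ℝ) - n)) * (χ 0 - χd 0) ^ β)
      = (χ 0 - χd 0) ^ β := by
    rw [hβ]; field_simp
  have hct : (η * β) * ((m:ℝ) / (η * ((m:ℝ) - n)) * (χ 0 - χd 0) ^ β) ≤ (η * β) * t1 :=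
    mul_le_mul_of_nonneg_left ht1 hc.le
  rw [hgt1, hg0] at heq
  linarith
end

section
/- Let σ > 0 and let y : [0,∞) → ℝ be continuous, differentiable at every t with y(t) ≠ 0, and satisfy y'(t) = −σ·sign(y(t))/(1 + |y(t)|) at every such t. Set t* = (|y(0)| + y(0)²/2)/σ. Then |y| is nonincreasing on [0,∞), y(t) ≠ 0 for all 0 ≤ t < t* (provided y(0) ≠ 0), and y(t) = 0 for all t ≥ t*. -/
open Real Set

/-- Scalar finite-time sliding-mode convergence lemma underlying Proposition 2:
if `y' = -σ·sign(y)/(1 + |y|)` wherever `y ≠ 0`, then `|y|` is nonincreasing,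
`y` stays away from zero before `t* = (|y 0| + y 0²/2)/σ` (when `y 0 ≠ 0`),
and `y` vanishes from `t*` onwards. -/
theorem stmt4 (σ : ℝ) (hσ : 0 < σ) (y : ℝ → ℝ)
    (hcont : ContinuousOn y (Ici 0))
    (hy : ∀ t, 0 ≤ t → y t ≠ 0 →
      HasDerivAt y (-σ * Real.sign (y t) / (1 + |y t|)) t)
    (tstar : ℝ) (htstar : tstar = (|y 0| + y 0 ^ 2 / 2) / σ) :
    AntitoneOn (fun t => |y t|) (Ici 0) ∧
      (y 0 ≠ 0 → ∀ t, 0 ≤ t → t < tstar → y t ≠ 0) ∧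
      ∀ t, tstar ≤ t → y t = 0 := by
  set V : ℝ → ℝ := fun t => |y t| + y t ^ 2 / 2 with hV
  have hVpos : ∀ t, y t ≠ 0 → 0 < V t := by
    intro t h
    have h1 : 0 < |y t| := abs_pos.mpr h
    have h2 : 0 ≤ y t ^ 2 / 2 := by positivity
    show 0 < |y t| + y t ^ 2 / 2
    linarith
  have hVcont : ContinuousOn V (Ici 0) := hcont.abs.add ((hcont.pow 2).div_const 2)
  -- derivative of V is -σ wherever y ≠ 0
  have hVderiv : ∀ t, 0 ≤ t → y t ≠ 0 → HasDerivAt V (-σ) t := by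
    intro t ht hne
    have h := hy t ht hne
    have hyc : ContinuousAt y t := h.continuousAt
    set d : ℝ := -σ * Real.sign (y t) / (1 + |y t|) with hd
    have hsq : HasDerivAt (fun u => y u ^ 2 / 2) (y t * d) t := by
      have := (h.pow 2).div_const 2
      refine this.congr_deriv ?_
      ring
    rcases hne.lt_or_gt with hneg | hpos
    · have hev : ∀ᶠ u in nhds t, y u < 0 :=
        Filter.Tendsto.eventually_lt_const hneg hyc
      have habs : HasDerivAt (fun u => |y u|) (-d) t := by
        refine HasDerivAt.congr_of_eventuallyEq h.neg ?_
        filter_upwards [hev] with u hu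
        exact abs_of_neg hu
      have := habs.add hsq
      refine this.congr_deriv ?_
      have hsgn : Real.sign (y t) = -1 := Real.sign_of_neg hneg
      have habs' : |y t| = -y t := abs_of_neg hneg
      rw [hd, hsgn, habs']
      have hne1 : (1:ℝ) - y t ≠ 0 := by intro h; nlinarith
      have hne2 : (1:ℝ) + -y t ≠ 0 := by intro h; nlinarith
      field_simp [hne1, hne2]
      ring
    · have hev : ∀ᶠ u in nhds t, 0 < y u :=
        Filter.Tendsto.eventually_const_lt hpos hyc
      have habs : HasDerivAt (fun u => |y u|) d t := by
        refine HasDerivAt.congr_of_eventuallyEq h ?_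
        filter_upwards [hev] with u hu
        exact abs_of_pos hu
      have := habs.add hsq
      refine this.congr_deriv ?_
      have hsgn : Real.sign (y t) = 1 := Real.sign_of_pos hpos
      have habs' : |y t| = y t := abs_of_pos hpos
      rw [hd, hsgn, habs']
      have hne1 : (1:ℝ) + y t ≠ 0 := by intro h; nlinarith
      field_simp [hne1]
      ring
  -- Lemma A: V decays exactly linearly on intervals where y ≠ 0
  have lemA : ∀ a b : ℝ, 0 ≤ a → a ≤ b → (∀ t ∈ Icc a b, y t ≠ 0) →
      V b + σ * b = V a + σ * a := by
    intro a b ha hab hne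
    have key := constant_of_has_deriv_right_zero
      (f := fun t => V t + σ * t) (a := a) (b := b)
      (fun x hx =>
        ((hVderiv x (ha.trans hx.1) (hne x hx)).add
          ((hasDerivAt_id x).const_mul σ)).continuousAt.continuousWithinAt)
      (by
        intro x hx
        have hx' : x ∈ Icc a b := ⟨hx.1, hx.2.le⟩
        have h := (hVderiv x (ha.trans hx.1) (hne x hx')).add
          ((hasDerivAt_id x).const_mul σ)
        have h0 : -σ + σ * 1 = 0 := by ring
        rw [h0] at h
        exact h.hasDerivWithinAt)
    exact key b (right_mem_Icc.mpr hab)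
  -- zero is absorbing
  have habsorb : ∀ t0 t1 : ℝ, 0 ≤ t0 → t0 ≤ t1 → y t0 = 0 → y t1 = 0 := by
    intro t0 t1 ht0 h01 hy0
    by_contra h1
    have hlt : t0 < t1 := h01.lt_of_ne (fun h => h1 (by rw [← h]; exact hy0))
    set S : Set ℝ := {u | u ∈ Icc t0 t1 ∧ y u = 0} with hS
    have hSne : S.Nonempty := ⟨t0, ⟨le_refl _, hlt.le⟩, hy0⟩
    have hSbdd : BddAbove S := ⟨t1, fun u hu => hu.1.2⟩
    have hSclosed : IsClosed S := by
      have hc : ContinuousOn y (Icc t0 t1) := hcont.mono (fun u hu => ht0.trans hu.1)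
      have hSeq : S = Icc t0 t1 ∩ y ⁻¹' {0} := by ext u; simp [hS]
      rw [hSeq]
      exact hc.preimage_isClosed_of_isClosed isClosed_Icc isClosed_singleton
    set s := sSup S with hs
    have hsS : s ∈ S := hSclosed.csSup_mem hSne hSbdd
    have hys : y s = 0 := hsS.2
    have hst1 : s < t1 := hsS.1.2.lt_of_ne (fun h => h1 (by rw [← h]; exact hys))
    have hs0 : 0 ≤ s := ht0.trans hsS.1.1
    have hne' : ∀ u ∈ Ioc s t1, y u ≠ 0 := by
      intro u hu hyu
      exact absurd (le_csSup hSbdd ⟨⟨hsS.1.1.trans hu.1.le, hu.2⟩, hyu⟩)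
        (not_le.mpr hu.1)
    have hgconst : ∀ u ∈ Ioc s t1, V u + σ * u = V t1 + σ * t1 := by
      intro u hu
      have h0u : 0 ≤ u := hs0.trans hu.1.le
      exact (lemA u t1 h0u hu.2
        (fun v hv => hne' v ⟨hu.1.trans_le hv.1, hv.2⟩)).symm
    have hnb : (nhdsWithin s (Ioc s t1)).NeBot := by
      refine mem_closure_iff_nhdsWithin_neBot.mp ?_
      rw [closure_Ioc hst1.ne]
      exact ⟨le_refl s, hst1.le⟩
    have htend1 : Filter.Tendsto (fun u => V u + σ * u) (nhdsWithin s (Ioc s t1))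
        (nhds (V s + σ * s)) := by
      have hc : ContinuousWithinAt (fun u => V u + σ * u) (Ici 0) s :=
        (hVcont s hs0).add (continuous_const.mul continuous_id).continuousWithinAt
      exact hc.mono (fun u hu => hs0.trans hu.1.le)
    have htend2 : Filter.Tendsto (fun u => V u + σ * u) (nhdsWithin s (Ioc s t1))
        (nhds (V t1 + σ * t1)) := by
      refine Filter.Tendsto.congr' ?_ tendsto_const_nhds
      filter_upwards [self_mem_nhdsWithin] with u hu
      exact (hgconst u hu).symm
    have heq : V s + σ * s = V t1 + σ * t1 := tendsto_nhds_unique htend1 htend2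
    have hVt1 : 0 < V t1 := hVpos t1 h1
    have hVs : V s = 0 := by
      show |y s| + y s ^ 2 / 2 = 0
      rw [hys]; simp
    nlinarith [mul_pos hσ (sub_pos.mpr hst1)]
  refine ⟨?_, ?_, ?_⟩
  · -- |y| antitone
    intro a ha b hb hab
    by_cases hb0 : y b = 0
    · show |y b| ≤ |y a|
      rw [hb0]; simp
    · have hne : ∀ t ∈ Icc a b, y t ≠ 0 := by
        intro t ht hyt
        exact hb0 (habsorb t b (ha.trans ht.1) ht.2 hyt)
      have hA := lemA a b ha hab hne
      have hVba : V b ≤ V a := by nlinarith [mul_le_mul_of_nonneg_left hab hσ.le]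
      have h1 : |y b| + y b ^ 2 / 2 ≤ |y a| + y a ^ 2 / 2 := hVba
      show |y b| ≤ |y a|
      nlinarith [abs_nonneg (y a), abs_nonneg (y b), sq_abs (y a), sq_abs (y b)]
  · -- no zero before tstar
    intro h0 t ht htlt hyt
    set S : Set ℝ := {u | u ∈ Icc 0 t ∧ y u = 0} with hS
    have hSne : S.Nonempty := ⟨t, ⟨ht, le_refl t⟩, hyt⟩
    have hSbdd : BddBelow S := ⟨0, fun u hu => hu.1.1⟩
    have hSclosed : IsClosed S := by
      have hc : ContinuousOn y (Icc 0 t) := hcont.mono (fun u hu => hu.1)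
      have hSeq : S = Icc 0 t ∩ y ⁻¹' {0} := by ext u; simp [hS]
      rw [hSeq]
      exact hc.preimage_isClosed_of_isClosed isClosed_Icc isClosed_singleton
    set s := sInf S with hs
    have hsS : s ∈ S := hSclosed.csInf_mem hSne hSbdd
    have hys : y s = 0 := hsS.2
    have hspos : 0 < s := hsS.1.1.lt_of_ne (fun h => h0 ((congrArg y h).trans hys))
    have hne' : ∀ u ∈ Ico 0 s, y u ≠ 0 := by
      intro u hu hyu
      exact absurd (csInf_le hSbdd ⟨⟨hu.1, hu.2.le.trans hsS.1.2⟩, hyu⟩)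
        (not_le.mpr hu.2)
    have hgconst : ∀ u ∈ Ico 0 s, V u + σ * u = V 0 := by
      intro u hu
      have := lemA 0 u (le_refl 0) hu.1
        (fun v hv => hne' v ⟨hv.1, hv.2.trans_lt hu.2⟩)
      simpa using this
    have hnb : (nhdsWithin s (Ico 0 s)).NeBot := by
      refine mem_closure_iff_nhdsWithin_neBot.mp ?_
      rw [closure_Ico hspos.ne]
      exact ⟨hspos.le, le_refl s⟩
    have htend1 : Filter.Tendsto (fun u => V u + σ * u) (nhdsWithin s (Ico 0 s))
        (nhds (V s + σ * s)) := by
      have hc : ContinuousWithinAt (fun u => V u + σ * u) (Ici 0) s :=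
        (hVcont s hspos.le).add (continuous_const.mul continuous_id).continuousWithinAt
      exact hc.mono (fun u hu => hu.1)
    have htend2 : Filter.Tendsto (fun u => V u + σ * u) (nhdsWithin s (Ico 0 s))
        (nhds (V 0)) := by
      refine Filter.Tendsto.congr' ?_ tendsto_const_nhds
      filter_upwards [self_mem_nhdsWithin] with u hu
      exact (hgconst u hu).symm
    have heq : V s + σ * s = V 0 := tendsto_nhds_unique htend1 htend2
    have hVs : V s = 0 := by
      show |y s| + y s ^ 2 / 2 = 0
      rw [hys]; simp
    have hV0 : V 0 = σ * tstar := by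
      show |y 0| + y 0 ^ 2 / 2 = σ * tstar
      rw [htstar]
      field_simp
    have hstle : s ≤ t := hsS.1.2
    nlinarith
  · -- y vanishes from tstar on
    intro t htt
    have htstar0 : 0 ≤ tstar := by
      rw [htstar]; positivity
    have ht0 : 0 ≤ t := htstar0.trans htt
    by_contra hyt
    have hne : ∀ u ∈ Icc 0 t, y u ≠ 0 := fun u hu hyu =>
      hyt (habsorb u t hu.1 hu.2 hyu)
    have hA := lemA 0 t (le_refl 0) ht0 hne
    have hVt : 0 < V t := hVpos t hyt
    have hV0 : V 0 = σ * tstar := by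
      show |y 0| + y 0 ^ 2 / 2 = σ * tstar
      rw [htstar]
      field_simp
    nlinarith [mul_le_mul_of_nonneg_left htt hσ.le]
end

section
/- (Proposition 2, Case 2.) Suppose d, χ, χ^p : [0,∞) → ℝ with χ continuous, d and χ^p differentiable, d'(t) = V_g·sin(χ(t) − χ^p(t)), and χ'(t) = α·(χ^c(t) − χ(t)) wherever χ is differentiable. Define χ^d(t) = χ^p(t) − arctan(k₃·d(t)³) and χ̃ = χ − χ^d, and let the command be χ^c = χ + χ^p'/α − (1/α)·(3k₃·d²/(1 + (k₃·d³)²))·V_g·sin(χ − χ^p) − (β/α)·sign(χ̃) with β = σ/(1 + |χ̃|), σ > 0. Then at every t with χ̃(t) ≠ 0 one has χ̃'(t) = −σ·sign(χ̃(t))/(1 + |χ̃(t)|); consequently |χ̃| is monotonically nonincreasing and χ̃(t) = 0 for all t ≥ (|χ̃(0)| + χ̃(0)²/2)/σ. -/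
open Real Set

/-- Proposition 2 (Case 2 of the switched vector field): with
`χ^d = χ^p - arctan(k₃ d³)`, `χ̃ = χ - χ^d` and the sliding-mode command `χ^c`
(with `β = σ/(1 + |χ̃|)`), the course error obeys
`χ̃' = -σ·sign(χ̃)/(1 + |χ̃|)` off the sliding surface,
`|χ̃|` is nonincreasing, and `χ̃` vanishes after `(|χ̃(0)| + χ̃(0)²/2)/σ`. -/
theorem stmt5 (Vg α k₃ σ : ℝ) (hVg : 0 < Vg) (hα : 0 < α) (hk₃ : 0 < k₃) (hσ : 0 < σ)
    (d χ χp χp' χc χd : ℝ → ℝ)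
    (hχcont : ContinuousOn χ (Ici 0))
    (hd : ∀ t, 0 ≤ t → HasDerivAt d (Vg * Real.sin (χ t - χp t)) t)
    (hχp : ∀ t, 0 ≤ t → HasDerivAt χp (χp' t) t)
    (hχd : χd = fun t => χp t - Real.arctan (k₃ * d t ^ 3))
    (hχ : ∀ t, 0 ≤ t → χ t - χd t ≠ 0 → HasDerivAt χ (α * (χc t - χ t)) t)
    (hχc : χc = fun t => χ t + χp' t / α
        - (1 / α) * (3 * k₃ * d t ^ 2 / (1 + (k₃ * d t ^ 3) ^ 2)) * Vg * Real.sin (χ t - χp t)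
        - (σ / (1 + |χ t - χd t|) / α) * Real.sign (χ t - χd t)) :
    (∀ t, 0 ≤ t → χ t - χd t ≠ 0 →
      HasDerivAt (fun s => χ s - χd s)
        (-σ * Real.sign (χ t - χd t) / (1 + |χ t - χd t|)) t) ∧
      AntitoneOn (fun t => |χ t - χd t|) (Ici 0) ∧
      ∀ t, (|χ 0 - χd 0| + (χ 0 - χd 0) ^ 2 / 2) / σ ≤ t → χ t - χd t = 0 := by
  set e : ℝ → ℝ := fun t => χ t - χd t with he
  -- the derivative claim
  have key : ∀ t, 0 ≤ t → e t ≠ 0 →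
      HasDerivAt e (-σ * Real.sign (e t) / (1 + |e t|)) t := by
    intro t ht hne
    have hd' := hd t ht
    have hχp' := hχp t ht
    have hχ' := hχ t ht hne
    have hpos : (0:ℝ) < 1 + (k₃ * d t ^ 3) ^ 2 := by positivity
    have habs : (0:ℝ) < 1 + |e t| := by positivity
    have h1 : HasDerivAt (fun s => k₃ * d s ^ 3)
        (k₃ * (3 * d t ^ 2 * (Vg * Real.sin (χ t - χp t)))) t := by
      have := (hd'.pow 3).const_mul k₃
      exact this.congr_deriv (by norm_num)
    have harc : HasDerivAt (fun s => Real.arctan (k₃ * d s ^ 3))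
        ((1 / (1 + (k₃ * d t ^ 3) ^ 2)) *
          (k₃ * (3 * d t ^ 2 * (Vg * Real.sin (χ t - χp t))))) t :=
      by have := (Real.hasDerivAt_arctan (k₃ * d t ^ 3)).comp t h1; exact this
    have hχdd : HasDerivAt χd
        (χp' t - (1 / (1 + (k₃ * d t ^ 3) ^ 2)) *
          (k₃ * (3 * d t ^ 2 * (Vg * Real.sin (χ t - χp t))))) t := by
      rw [hχd]; exact hχp'.sub harc
    have heq : α * (χc t - χ t) -
        (χp' t - (1 / (1 + (k₃ * d t ^ 3) ^ 2)) *
          (k₃ * (3 * d t ^ 2 * (Vg * Real.sin (χ t - χp t)))))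
        = -σ * Real.sign (e t) / (1 + |e t|) := by
      rw [hχc]
      simp only [he]
      field_simp
      ring
    exact heq ▸ hχ'.sub hχdd
  -- continuity of e and the Lyapunov function
  have hdcont : ContinuousOn d (Ici 0) := fun t ht => (hd t ht).continuousAt.continuousWithinAt
  have hχpcont : ContinuousOn χp (Ici 0) := fun t ht => (hχp t ht).continuousAt.continuousWithinAt
  have hecont : ContinuousOn e (Ici 0) := by
    rw [he, hχd]
    exact hχcont.sub (hχpcont.sub (Real.continuous_arctan.comp_continuousOn
      ((continuousOn_const.mul ((hdcont.pow 3))))))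
  set V : ℝ → ℝ := fun t => |e t| + e t ^ 2 / 2 with hV
  have hVcont : ContinuousOn V (Ici 0) := hecont.abs.add ((hecont.pow 2).div_const 2)
  have hVnonneg : ∀ t, 0 ≤ V t := fun t => by
    have := abs_nonneg (e t); have := sq_nonneg (e t); simp only [hV]; nlinarith
  -- decrease lemma
  have dec : ∀ a b : ℝ, 0 ≤ a → a ≤ b → (∀ s ∈ Ioo a b, e s ≠ 0) →
      V b + σ * b ≤ V a + σ * a := by
    intro a b ha hab hne
    have hsub : Icc a b ⊆ Ici 0 := fun x hx => le_trans ha hx.1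
    have hW : ∀ x ∈ Ioo a b, HasDerivAt (fun t => V t + σ * t) 0 x := by
      intro x hx
      have hx0 : (0:ℝ) ≤ x := le_trans ha hx.1.le
      have hnex := hne x hx
      have hDe := key x hx0 hnex
      have habs : HasDerivAt (fun t => |e t|)
          ((SignType.sign (e x) : ℝ) * (-σ * Real.sign (e x) / (1 + |e x|))) x :=
        (hasDerivAt_abs hnex).comp x hDe
      have hsq : HasDerivAt (fun t => e t ^ 2 / 2)
          (2 * e x ^ 1 * (-σ * Real.sign (e x) / (1 + |e x|)) / 2) x :=
        (hDe.pow 2).div_const 2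
      have hid : HasDerivAt (fun t : ℝ => σ * t) σ x := by
        simpa using (hasDerivAt_id x).const_mul σ
      have := (habs.add hsq).add hid
      refine this.congr_deriv ?_
      rcases hnex.lt_or_gt with hneg | hpos
      · have hs1 : Real.sign (e x) = -1 := Real.sign_of_neg hneg
        have hs2 : (SignType.sign (e x) : ℝ) = -1 := by
          rw [sign_neg hneg]; norm_num
        have ha : |e x| = -e x := abs_of_neg hneg
        rw [hs1, hs2, ha]
        have h2 : (1:ℝ) + -e x ≠ 0 := by nlinarith
        field_simp
        ring
      · have hs1 : Real.sign (e x) = 1 := Real.sign_of_pos hpos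
        have hs2 : (SignType.sign (e x) : ℝ) = 1 := by
          rw [sign_pos hpos]; norm_num
        have ha : |e x| = e x := abs_of_pos hpos
        rw [hs1, hs2, ha]
        have h2 : (1:ℝ) + e x ≠ 0 := by nlinarith
        field_simp
        ring
    have hanti : AntitoneOn (fun t => V t + σ * t) (Icc a b) := by
      apply antitoneOn_of_deriv_nonpos (convex_Icc a b)
      · exact (hVcont.mono hsub).add (continuous_const.mul continuous_id).continuousOn
      · intro x hx
        rw [interior_Icc] at hx
        exact (hW x hx).differentiableAt.differentiableWithinAt
      · intro x hx
        rw [interior_Icc] at hx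
        rw [(hW x hx).deriv]
    exact hanti (left_mem_Icc.2 hab) (right_mem_Icc.2 hab) hab
  -- once zero, stays zero
  have stay : ∀ a b : ℝ, 0 ≤ a → a ≤ b → e a = 0 → e b = 0 := by
    intro a b ha hab hea
    by_contra hb
    set Z := {x | x ∈ Icc a b ∧ e x = 0} with hZ
    have hZne : Z.Nonempty := ⟨a, ⟨left_mem_Icc.2 hab, hea⟩⟩
    have hZclosed : IsClosed Z := by
      have : Z = Icc a b ∩ e ⁻¹' {0} := by ext x; simp [hZ, Set.mem_preimage]
      rw [this]
      exact (hecont.mono (fun x hx => le_trans ha hx.1)).preimage_isClosed_of_isClosed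
        isClosed_Icc isClosed_singleton
    have hZcompact : IsCompact Z := isCompact_Icc.of_isClosed_subset hZclosed (fun x hx => hx.1)
    obtain ⟨s, hsZ, hsmax⟩ := hZcompact.exists_isGreatest hZne
    have hes : e s = 0 := hsZ.2
    have hsab : s ∈ Icc a b := hsZ.1
    have hsb : s < b := lt_of_le_of_ne hsab.2 (fun h => hb (h ▸ hes))
    have hne' : ∀ x ∈ Ioo s b, e x ≠ 0 := by
      intro x hx h0
      have : x ∈ Z := ⟨⟨le_trans hsab.1 hx.1.le, hx.2.le⟩, h0⟩
      exact absurd (hsmax this) (not_le.2 hx.1)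
    have := dec s b (le_trans ha hsab.1) hsb.le hne'
    have hVs : V s = 0 := by simp [hV, hes]
    have hVb : 0 < V b := lt_of_lt_of_le (abs_pos.2 hb)
      (le_add_of_nonneg_right (by positivity))
    nlinarith [mul_pos hσ (sub_pos.2 hsb)]
  refine ⟨key, ?_, ?_⟩
  · intro a ha b hb hab
    show |e b| ≤ |e a|
    by_cases hz : ∃ s ∈ Icc a b, e s = 0
    · obtain ⟨s, hs, hes⟩ := hz
      have heb : e b = 0 := stay s b (le_trans ha hs.1) hs.2 hes
      rw [heb]
      simpa using abs_nonneg (e a)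
    · push_neg at hz
      have hdec := dec a b ha hab (fun x hx => hz x ⟨hx.1.le, hx.2.le⟩)
      have h1 : |e b| + e b ^ 2 / 2 ≤ |e a| + e a ^ 2 / 2 := by
        have hσab : σ * a ≤ σ * b := mul_le_mul_of_nonneg_left hab hσ.le
        simp only [hV] at hdec
        linarith
      by_contra hlt
      push_neg at hlt
      have h2 : |e a| ^ 2 < |e b| ^ 2 :=
        pow_lt_pow_left₀ hlt (abs_nonneg (e a)) two_ne_zero
      rw [sq_abs, sq_abs] at h2
      clear_value e
      linarith
  · intro t ht
    have hV0 : V 0 = |χ 0 - χd 0| + (χ 0 - χd 0) ^ 2 / 2 := rfl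
    have hT0 : 0 ≤ (|χ 0 - χd 0| + (χ 0 - χd 0) ^ 2 / 2) / σ := by positivity
    have ht0 : 0 ≤ t := le_trans hT0 ht
    by_contra hne0
    have hAll : ∀ x ∈ Ioo (0:ℝ) t, e x ≠ 0 := by
      intro x hx h0
      exact hne0 (stay x t hx.1.le hx.2.le h0)
    have hdec := dec 0 t le_rfl ht0 hAll
    have hVt : 0 < V t := lt_of_lt_of_le (abs_pos.2 hne0)
      (le_add_of_nonneg_right (by positivity))
    have hge : V 0 ≤ σ * t := by
      rw [hV0]
      calc |χ 0 - χd 0| + (χ 0 - χd 0) ^ 2 / 2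
          = ((|χ 0 - χd 0| + (χ 0 - χd 0) ^ 2 / 2) / σ) * σ := by field_simp
        _ ≤ t * σ := mul_le_mul_of_nonneg_right ht hσ.le
        _ = σ * t := mul_comm _ _
    nlinarith
end

section
/- (Proposition 3.) Let V_g > 0, k₃ > 0, and d_s > 0. Suppose d : [0,∞) → ℝ is differentiable with d'(t) = −V_g·k₃·d(t)³/√(1 + (k₃·d(t)³)²) for all t (this is the cross-track dynamics when the course equals the desired course χ^d(d) = χ^p − arctan(k₃·d³), since sin(arctan x) = x/√(1+x²)). If d(0) > d_s, then as long as d(t) ≥ d_s one has d'(t) ≤ −V_g·k₃·d_s³/√(1 + (k₃·d_s³)²) < 0, and there exists a time t₁ ≤ (d(0) − d_s)·√(1 + (k₃·d_s³)²)/(V_g·k₃·d_s³) with d(t₁) = d_s; in particular |d| is strictly decreasing and reaches the switching threshold d_s in finite time. -/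
open Real Set

private lemma sq_sqrt_pos (y : ℝ) : 0 < Real.sqrt (1 + y ^ 2) := by
  apply Real.sqrt_pos.2; positivity

private lemma sqrt_ge_one (y : ℝ) : 1 ≤ Real.sqrt (1 + y ^ 2) := by
  nlinarith [Real.sq_sqrt (show (0:ℝ) ≤ 1 + y ^ 2 by positivity),
    Real.sqrt_nonneg (1 + y ^ 2), sq_nonneg y]

/-- monotonicity of `u ↦ u/√(1+u²)` on nonneg reals -/
private lemma key_mono {u v : ℝ} (hu : 0 ≤ u) (huv : u ≤ v) :
    u / Real.sqrt (1 + u ^ 2) ≤ v / Real.sqrt (1 + v ^ 2) := by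
  rw [div_le_div_iff₀ (sq_sqrt_pos u) (sq_sqrt_pos v)]
  have h1 : u * Real.sqrt (1 + v ^ 2) = Real.sqrt (u ^ 2 * (1 + v ^ 2)) := by
    rw [Real.sqrt_mul (sq_nonneg u), Real.sqrt_sq hu]
  have h2 : v * Real.sqrt (1 + u ^ 2) = Real.sqrt (v ^ 2 * (1 + u ^ 2)) := by
    rw [Real.sqrt_mul (sq_nonneg v), Real.sqrt_sq (hu.trans huv)]
  rw [h1, h2]
  apply Real.sqrt_le_sqrt
  nlinarith

/-- Proposition 3: on the sliding surface of the cubic branch,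
`d' = -V_g·k₃·d³/√(1 + (k₃ d³)²)`; if `d(0) > d_s`, then while `d ≥ d_s` the
decrease rate is bounded away from zero, `d` reaches the switching threshold `d_s`
within time `(d(0) - d_s)·√(1 + (k₃ d_s³)²)/(V_g k₃ d_s³)`, and `|d|` is
strictly decreasing. -/
theorem stmt6 (Vg k₃ ds : ℝ) (hVg : 0 < Vg) (hk₃ : 0 < k₃) (hds : 0 < ds)
    (d : ℝ → ℝ)
    (hd : ∀ t, HasDerivAt d (-(Vg * k₃ * d t ^ 3 / Real.sqrt (1 + (k₃ * d t ^ 3) ^ 2))) t)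
    (h0 : ds < d 0) :
    (∀ t, 0 ≤ t → ds ≤ d t →
        deriv d t ≤ -(Vg * k₃ * ds ^ 3 / Real.sqrt (1 + (k₃ * ds ^ 3) ^ 2))) ∧
      -(Vg * k₃ * ds ^ 3 / Real.sqrt (1 + (k₃ * ds ^ 3) ^ 2)) < 0 ∧
      (∃ t₁, 0 ≤ t₁ ∧
        t₁ ≤ (d 0 - ds) * Real.sqrt (1 + (k₃ * ds ^ 3) ^ 2) / (Vg * k₃ * ds ^ 3) ∧
        d t₁ = ds) ∧
      StrictAntiOn (fun t => |d t|) (Ici 0) := by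
  -- abbreviations
  set c : ℝ := Vg * k₃ * ds ^ 3 / Real.sqrt (1 + (k₃ * ds ^ 3) ^ 2) with hc
  have hcpos : 0 < c := by
    apply div_pos (by positivity) (sq_sqrt_pos _)
  have hderiv : ∀ t, deriv d t
      = -(Vg * k₃ * d t ^ 3 / Real.sqrt (1 + (k₃ * d t ^ 3) ^ 2)) :=
    fun t => (hd t).deriv
  have hcont : Continuous d :=
    continuous_iff_continuousAt.2 fun t => (hd t).differentiableAt.continuousAt
  -- the rate bound
  have hrate : ∀ t, ds ≤ d t → deriv d t ≤ -c := by
    intro t hge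
    rw [hderiv t, neg_le_neg_iff, hc]
    have h1 : Vg * k₃ * ds ^ 3 / Real.sqrt (1 + (k₃ * ds ^ 3) ^ 2)
        = Vg * (k₃ * ds ^ 3 / Real.sqrt (1 + (k₃ * ds ^ 3) ^ 2)) := by ring
    have h2 : Vg * k₃ * d t ^ 3 / Real.sqrt (1 + (k₃ * d t ^ 3) ^ 2)
        = Vg * (k₃ * d t ^ 3 / Real.sqrt (1 + (k₃ * d t ^ 3) ^ 2)) := by ring
    rw [h1, h2]
    apply mul_le_mul_of_nonneg_left _ hVg.le
    exact key_mono (by positivity) (by nlinarith [pow_le_pow_left₀ hds.le hge 3])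
  -- d never vanishes on [0,∞)
  have hne : ∀ t, 0 ≤ t → d t ≠ 0 := by
    intro t0 ht0 hzero
    -- Gronwall backwards
    obtain ⟨M, hM⟩ := (isCompact_Icc (a := (0:ℝ)) (b := t0)).exists_bound_of_continuousOn
      hcont.continuousOn
    have hM0 : 0 ≤ M := le_trans (norm_nonneg _) (hM 0 ⟨le_refl _, ht0⟩)
    set K : ℝ := Vg * k₃ * M ^ 2 with hK
    set h : ℝ → ℝ := fun s => d (t0 - s) with hh
    have hh' : ∀ s, HasDerivAt h
        (Vg * k₃ * d (t0 - s) ^ 3 / Real.sqrt (1 + (k₃ * d (t0 - s) ^ 3) ^ 2)) s := by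
      intro s
      have := (hd (t0 - s)).comp s ((hasDerivAt_id s).const_sub t0)
      exact (by simpa using this.congr_deriv (by ring) :
        HasDerivAt (d ∘ HSub.hSub t0) (Vg * k₃ * d (t0 - s) ^ 3 / Real.sqrt (1 + (k₃ * d (t0 - s) ^ 3) ^ 2)) s)
    have key : ∀ s ∈ Icc 0 t0, ‖h s‖ ≤ gronwallBound 0 K 0 (s - 0) := by
      apply norm_le_gronwallBound_of_norm_deriv_right_le
        (f' := fun s => Vg * k₃ * d (t0 - s) ^ 3 / Real.sqrt (1 + (k₃ * d (t0 - s) ^ 3) ^ 2))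
      · exact (hcont.comp (by fun_prop)).continuousOn
      · exact fun s _ => (hh' s).hasDerivWithinAt
      · simp [hh, hzero]
      · intro s hs
        have hmem : t0 - s ∈ Icc (0:ℝ) t0 := ⟨by linarith [hs.2.le], by linarith [hs.1]⟩
        have hb := hM _ hmem
        rw [Real.norm_eq_abs] at hb ⊢
        have hS := sqrt_ge_one (k₃ * d (t0 - s) ^ 3)
        have habs : |Vg * k₃ * d (t0 - s) ^ 3 / Real.sqrt (1 + (k₃ * d (t0 - s) ^ 3) ^ 2)|
            ≤ Vg * k₃ * |d (t0 - s)| ^ 3 := by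
          rw [abs_div, abs_of_nonneg (Real.sqrt_nonneg _)]
          calc |Vg * k₃ * d (t0 - s) ^ 3| / Real.sqrt (1 + (k₃ * d (t0 - s) ^ 3) ^ 2)
              ≤ |Vg * k₃ * d (t0 - s) ^ 3| / 1 := by
                apply div_le_div_of_nonneg_left (abs_nonneg _) one_pos hS
            _ = Vg * k₃ * |d (t0 - s)| ^ 3 := by
                rw [div_one, abs_mul, abs_mul, abs_pow,
                  abs_of_pos hVg, abs_of_pos hk₃]
        refine habs.trans ?_
        have : |d (t0 - s)| ^ 3 ≤ M ^ 2 * |d (t0 - s)| := by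
          nlinarith [mul_nonneg (mul_nonneg (abs_nonneg (d (t0 - s)))
            (sub_nonneg.2 hb)) (add_nonneg hM0 (abs_nonneg (d (t0 - s))))]
        calc Vg * k₃ * |d (t0 - s)| ^ 3 ≤ Vg * k₃ * (M ^ 2 * |d (t0 - s)|) := by
              apply mul_le_mul_of_nonneg_left this (by positivity)
          _ = K * ‖h s‖ + 0 := by rw [Real.norm_eq_abs]; ring
    have := key t0 ⟨ht0, le_refl _⟩
    rw [gronwallBound_ε0_δ0] at this
    have hd0 : d 0 = 0 := by
      have : ‖d 0‖ ≤ 0 := by simpa [hh] using this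
      simpa using le_antisymm this (norm_nonneg _)
    linarith
  have hpos : ∀ t, 0 ≤ t → 0 < d t := by
    intro t ht
    by_contra hle
    push_neg at hle
    have hlt : d t < 0 := (hne t ht).lt_of_le hle
    -- IVT on [0, t]
    obtain ⟨u, hu, hdu⟩ : ∃ u ∈ Icc (0:ℝ) t, d u = 0 := by
      have : (0:ℝ) ∈ Icc (d t) (d 0) := ⟨hlt.le, by linarith⟩
      have := intermediate_value_Icc' (le_trans (le_refl 0) ht) hcont.continuousOn this
      obtain ⟨u, hu, hdu⟩ := this
      exact ⟨u, hu, hdu⟩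
    exact hne u hu.1 hdu
  refine ⟨fun t ht hge => hrate t hge, by linarith, ?_, ?_⟩
  · -- reach ds in finite time
    set T : ℝ := (d 0 - ds) / c with hT
    have hTpos : 0 < T := div_pos (by linarith) hcpos
    have hTeq : T = (d 0 - ds) * Real.sqrt (1 + (k₃ * ds ^ 3) ^ 2) / (Vg * k₃ * ds ^ 3) := by
      rw [hT, hc]
      field_simp
    -- ∃ t ∈ [0,T], d t ≤ ds
    by_cases hall : ∀ t ∈ Icc (0:ℝ) T, ds < d t
    · exfalso
      have hanti : AntitoneOn (fun t => d t + c * t) (Icc 0 T) := by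
        apply antitoneOn_of_deriv_nonpos (convex_Icc 0 T)
        · exact (hcont.add (continuous_const.mul continuous_id)).continuousOn
        · intro x _
          exact ((hd x).add ((hasDerivAt_id x).const_mul
            c)).differentiableAt.differentiableWithinAt
        · intro x hx
          rw [interior_Icc] at hx
          have hdx : HasDerivAt (fun t => d t + c * t)
              (-(Vg * k₃ * d x ^ 3 / Real.sqrt (1 + (k₃ * d x ^ 3) ^ 2)) + c) x :=
            (hd x).add (((hasDerivAt_id x).const_mul c).congr_deriv (by ring))
          rw [hdx.deriv]
          have := hrate x (hall x ⟨hx.1.le, hx.2.le⟩).le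
          rw [hderiv x] at this
          linarith
      have := hanti ⟨le_refl _, hTpos.le⟩ ⟨hTpos.le, le_refl _⟩ hTpos.le
      simp only at this
      have hcT : c * T = d 0 - ds := by
        rw [hT]; field_simp
      have := hall T ⟨hTpos.le, le_refl _⟩
      linarith
    · push_neg at hall
      obtain ⟨t2, ht2, hle⟩ := hall
      obtain ⟨t₁, ht₁, hdt₁⟩ : ∃ t₁ ∈ Icc (0:ℝ) t2, d t₁ = ds := by
        have : ds ∈ Icc (d t2) (d 0) := ⟨hle, by linarith⟩
        exact intermediate_value_Icc' ht2.1 hcont.continuousOn this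
      exact ⟨t₁, ht₁.1, by rw [← hTeq]; linarith [ht₁.2, ht2.2], hdt₁⟩
  · -- strict antitonicity of |d|
    have hanti : StrictAntiOn d (Ici 0) := by
      apply strictAntiOn_of_deriv_neg (convex_Ici 0) hcont.continuousOn
      intro x hx
      rw [interior_Ici] at hx
      rw [hderiv x]
      have := hpos x hx.le
      have hS := sq_sqrt_pos (k₃ * d x ^ 3)
      have : 0 < Vg * k₃ * d x ^ 3 / Real.sqrt (1 + (k₃ * d x ^ 3) ^ 2) := by positivity
      linarith
    intro s hs t ht hst
    simp only
    rw [abs_of_pos (hpos s hs), abs_of_pos (hpos t ht)]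
    exact hanti hs ht hst
end

section
/- Let i be a positive odd integer, and let k > 0, V_g > 0, and χ^∞ ∈ (0, π/2]. If d : [0,∞) → ℝ is differentiable and satisfies d'(t) = −V_g·sin((2χ^∞/π)·arctan(k·d(t)^i)) for all t, then d(t)·d'(t) < 0 whenever d(t) ≠ 0; consequently the Lyapunov function W(t) = d(t)²/2 is strictly decreasing at every t with d(t) ≠ 0, and |d| is nonincreasing on [0,∞). -/
open Real Set

private lemma sin_sign (c : ℝ) (hc0 : 0 < c) (hc1 : c ≤ 1) {x : ℝ} :
    (0 < x → 0 < Real.sin (c * Real.arctan x)) ∧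
    (x < 0 → Real.sin (c * Real.arctan x) < 0) := by
  constructor
  · intro hx
    have ha : 0 < Real.arctan x := by simpa using Real.arctan_strictMono hx
    apply Real.sin_pos_of_pos_of_lt_pi (by positivity)
    calc c * Real.arctan x ≤ Real.arctan x := mul_le_of_le_one_left ha.le hc1
      _ < π / 2 := Real.arctan_lt_pi_div_two x
      _ < π := by linarith [Real.pi_pos]
  · intro hx
    have ha : Real.arctan x < 0 := by simpa using Real.arctan_strictMono hx
    have h1 : c * Real.arctan x < 0 := mul_neg_of_pos_of_neg hc0 ha
    have h2 : -π < c * Real.arctan x := by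
      have : Real.arctan x ≤ c * Real.arctan x := by nlinarith
      have := Real.neg_pi_div_two_lt_arctan x
      linarith [Real.pi_pos]
    exact Real.sin_neg_of_neg_of_neg_pi_lt h1 h2

/-- Sign property of the cross-track dynamics on the desired vector field
(`Ẇ₃` Lyapunov argument): if `d' = -V_g·sin((2χ^∞/π)·arctan(k·d^i))` for a
positive odd `i`, `k > 0`, `V_g > 0`, `χ^∞ ∈ (0, π/2]`, then `d·d' < 0` whenever
`d ≠ 0`, the Lyapunov function `W = d²/2` is strictly decreasing at such
instants, and `|d|` is nonincreasing. -/
theorem stmt7 (i : ℕ) (hi : Odd i) (hi0 : 0 < i) (k Vg χinf : ℝ)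
    (hk : 0 < k) (hVg : 0 < Vg) (hχinf : χinf ∈ Set.Ioc 0 (π / 2))
    (d : ℝ → ℝ)
    (hd : ∀ t, HasDerivAt d (-(Vg * Real.sin (2 * χinf / π * Real.arctan (k * d t ^ i)))) t) :
    (∀ t, d t ≠ 0 → d t * deriv d t < 0) ∧
      (∀ t, d t ≠ 0 → deriv (fun s => d s ^ 2 / 2) t < 0) ∧
      AntitoneOn (fun t => |d t|) (Ici 0) := by
  obtain ⟨hχ0, hχ2⟩ := hχinf
  set c : ℝ := 2 * χinf / π with hc
  have hc0 : 0 < c := by positivity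
  have hc1 : c ≤ 1 := by
    rw [hc, div_le_one Real.pi_pos]; linarith
  -- key sign fact
  have key : ∀ t, d t ≠ 0 →
      d t * (-(Vg * Real.sin (c * Real.arctan (k * d t ^ i)))) < 0 := by
    intro t ht
    rcases lt_or_gt_of_ne ht with h | h
    · have hpow : d t ^ i < 0 := hi.pow_neg h
      have hz : k * d t ^ i < 0 := mul_neg_of_pos_of_neg hk hpow
      have hs := (sin_sign c hc0 hc1 (x := k * d t ^ i)).2 hz
      have : 0 < -(Vg * Real.sin (c * Real.arctan (k * d t ^ i))) := by nlinarith
      exact mul_neg_of_neg_of_pos h this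
    · have hpow : 0 < d t ^ i := pow_pos h i
      have hz : 0 < k * d t ^ i := mul_pos hk hpow
      have hs := (sin_sign c hc0 hc1 (x := k * d t ^ i)).1 hz
      have : -(Vg * Real.sin (c * Real.arctan (k * d t ^ i))) < 0 := by nlinarith
      exact mul_neg_of_pos_of_neg h this
  have key' : ∀ t, d t * (-(Vg * Real.sin (c * Real.arctan (k * d t ^ i)))) ≤ 0 := by
    intro t
    rcases eq_or_ne (d t) 0 with h | h
    · simp [h]
    · exact (key t h).le
  have hderiv : ∀ t, deriv d t = -(Vg * Real.sin (c * Real.arctan (k * d t ^ i))) :=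
    fun t => (hd t).deriv
  refine ⟨fun t ht => by rw [hderiv t]; exact key t ht, ?_, ?_⟩
  · intro t ht
    have hW : HasDerivAt (fun s => d s ^ 2 / 2)
        ((2 * d t ^ 1 * (-(Vg * Real.sin (c * Real.arctan (k * d t ^ i))))) / 2) t :=
      ((hd t).pow 2).div_const 2
    rw [hW.deriv]
    have := key t ht
    nlinarith
  · -- |d| antitone on Ici 0 via d^2 antitone
    have hsq : AntitoneOn (fun s => d s ^ 2) (Ici 0) := by
      apply antitoneOn_of_deriv_nonpos (convex_Ici 0)
      · exact Continuous.continuousOn (by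
          have : Differentiable ℝ d := fun t => (hd t).differentiableAt
          exact this.continuous.pow 2)
      · intro t _
        exact (((hd t).pow 2).differentiableAt).differentiableWithinAt
      · intro t _
        have hW : HasDerivAt (fun s => d s ^ 2)
            (2 * d t ^ 1 * (-(Vg * Real.sin (c * Real.arctan (k * d t ^ i))))) t :=
          (hd t).pow 2
        rw [hW.deriv]
        have := key' t
        nlinarith
    intro a ha b hb hab
    have h2 : d b ^ 2 ≤ d a ^ 2 := hsq ha hb hab
    have := Real.sqrt_le_sqrt h2
    simpa [Real.sqrt_sq_eq_abs] using this
end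

section
/- (Proposition 4, cross-track part.) Let V_g > 0 and k₁ > 0. Suppose d : [0,∞) → ℝ is differentiable with d'(t) = −V_g·k₁·d(t)/√(1 + (k₁·d(t))²) for all t (the cross-track dynamics when the course equals the desired course χ^d(d) = χ^p − arctan(k₁·d)). Then |d(t)| ≤ |d(0)|·exp(−V_g·k₁·t/√(1 + (k₁·d(0))²)) for all t ≥ 0; in particular d(t) → 0 as t → ∞. -/
open Real Set

/-- Proposition 4, cross-track part: on the sliding surface of the linear branch,
`d' = -V_g·k₁·d/√(1 + (k₁ d)²)`, so the cross-track error decays exponentially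
with rate `V_g·k₁/√(1 + (k₁ d(0))²)`, and in particular `d(t) → 0` as `t → ∞`. -/
theorem stmt8 (Vg k₁ : ℝ) (hVg : 0 < Vg) (hk₁ : 0 < k₁)
    (d : ℝ → ℝ)
    (hd : ∀ t, HasDerivAt d (-(Vg * k₁ * d t / Real.sqrt (1 + (k₁ * d t) ^ 2))) t) :
    (∀ t, 0 ≤ t →
        |d t| ≤ |d 0| * Real.exp (-(Vg * k₁ * t / Real.sqrt (1 + (k₁ * d 0) ^ 2)))) ∧
      Filter.Tendsto d Filter.atTop (nhds 0) := by
  set s : ℝ → ℝ := fun t => Real.sqrt (1 + (k₁ * d t) ^ 2) with hs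
  have hspos : ∀ t, 0 < s t := fun t => Real.sqrt_pos.2 (by positivity)
  set S0 : ℝ := s 0 with hS0
  set c : ℝ := Vg * k₁ / S0 with hc
  have hcpos : 0 < c := div_pos (by positivity) (hspos 0)
  -- d² has derivative 2 d d' ≤ 0, so d² is antitone
  have hsq : ∀ t, HasDerivAt (fun t => d t ^ 2)
      (2 * d t ^ 1 * -(Vg * k₁ * d t / s t)) t := fun t => (hd t).pow 2
  have hsq_anti : Antitone (fun t => d t ^ 2) := by
    apply antitone_of_deriv_nonpos
    · exact fun t => ((hsq t).differentiableAt)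
    · intro t
      rw [(hsq t).deriv]
      have h1 : 0 ≤ Vg * k₁ * d t ^ 2 / s t := by positivity
      have h2 : 2 * d t ^ 1 * -(Vg * k₁ * d t / s t)
          = -(2 * (Vg * k₁ * d t ^ 2 / s t)) := by ring
      rw [h2]; linarith
  have habs : ∀ t, 0 ≤ t → d t ^ 2 ≤ d 0 ^ 2 := fun t ht => hsq_anti ht
  have hsle : ∀ t, 0 ≤ t → s t ≤ S0 := by
    intro t ht
    apply Real.sqrt_le_sqrt
    have h := habs t ht
    have h2 : k₁ ^ 2 * d t ^ 2 ≤ k₁ ^ 2 * d 0 ^ 2 :=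
      mul_le_mul_of_nonneg_left h (sq_nonneg k₁)
    nlinarith [h2]
  -- h t = d t ^ 2 * exp (2 c t) is antitone on [0, ∞)
  have hh : ∀ t, HasDerivAt (fun t => d t ^ 2 * Real.exp (2 * c * t))
      (2 * d t ^ 1 * -(Vg * k₁ * d t / s t) * Real.exp (2 * c * t)
        + d t ^ 2 * (Real.exp (2 * c * t) * (2 * c))) t := by
    intro t
    have he : HasDerivAt (fun t : ℝ => Real.exp (2 * c * t)) (Real.exp (2 * c * t) * (2 * c)) t := by
      have : HasDerivAt (fun t : ℝ => 2 * c * t) (2 * c) t := by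
        simpa using (hasDerivAt_id t).const_mul (2 * c)
      simpa using this.exp
    exact (hsq t).mul he
  have hmono : AntitoneOn (fun t => d t ^ 2 * Real.exp (2 * c * t)) (Ici (0 : ℝ)) := by
    apply antitoneOn_of_deriv_nonpos (convex_Ici 0)
    · exact (Differentiable.continuous fun t => (hh t).differentiableAt).continuousOn
    · intro t ht
      exact ((hh t).differentiableAt).differentiableWithinAt
    · intro t ht
      rw [interior_Ici] at ht
      rw [((hh t).deriv)]
      have ht0 : (0:ℝ) ≤ t := le_of_lt ht
      have hstS : s t ≤ S0 := hsle t ht0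
      have h1 : Vg * k₁ * d t ^ 2 / S0 ≤ Vg * k₁ * d t ^ 2 / s t :=
        div_le_div_of_nonneg_left (by positivity) (hspos t) hstS
      have hE : 0 < Real.exp (2 * c * t) := Real.exp_pos _
      have hcc : c * (d t ^ 2) ≤ Vg * k₁ * d t ^ 2 / s t := by
        calc c * (d t ^ 2) = Vg * k₁ * d t ^ 2 / S0 := by rw [hc]; ring
        _ ≤ _ := h1
      have hfact : 2 * d t ^ 1 * -(Vg * k₁ * d t / s t) * Real.exp (2 * c * t)
          + d t ^ 2 * (Real.exp (2 * c * t) * (2 * c))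
          = (2 * Real.exp (2 * c * t)) * (c * d t ^ 2 - Vg * k₁ * d t ^ 2 / s t) := by ring
      rw [hfact]
      exact mul_nonpos_of_nonneg_of_nonpos (by positivity) (by linarith)
  have key : ∀ t, 0 ≤ t → |d t| ≤ |d 0| * Real.exp (-(c * t)) := by
    intro t ht
    have h1 : d t ^ 2 * Real.exp (2 * c * t) ≤ d 0 ^ 2 * Real.exp (2 * c * 0) :=
      hmono (Set.mem_Ici.mpr (le_refl 0)) (Set.mem_Ici.mpr ht) ht
    have h1' : d t ^ 2 * Real.exp (2 * c * t) ≤ d 0 ^ 2 := by simpa using h1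
    have h2 : d t ^ 2 ≤ d 0 ^ 2 * Real.exp (-(2 * c * t)) := by
      calc d t ^ 2 = d t ^ 2 * Real.exp (2 * c * t) * Real.exp (-(2 * c * t)) := by
            rw [mul_assoc, ← Real.exp_add]; norm_num
        _ ≤ d 0 ^ 2 * Real.exp (-(2 * c * t)) :=
            mul_le_mul_of_nonneg_right h1' (Real.exp_nonneg _)
    have h3 : Real.exp (-(2 * c * t)) = (Real.exp (-(c * t))) ^ 2 := by
      rw [← Real.exp_nat_mul]; ring_nf
    have h4 := Real.sqrt_le_sqrt h2
    rw [Real.sqrt_sq_eq_abs] at h4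
    rw [h3, Real.sqrt_mul (sq_nonneg _), Real.sqrt_sq_eq_abs,
      Real.sqrt_sq (Real.exp_nonneg _)] at h4
    exact h4
  constructor
  · intro t ht
    have := key t ht
    have heq : c * t = Vg * k₁ * t / S0 := by rw [hc]; ring
    rw [heq] at this
    exact this
  · rw [tendsto_zero_iff_norm_tendsto_zero]
    have hlim : Filter.Tendsto (fun t => |d 0| * Real.exp (-(c * t)))
        Filter.atTop (nhds 0) := by
      have : Filter.Tendsto (fun t : ℝ => Real.exp (-(c * t))) Filter.atTop (nhds 0) := by
        have h1 : Filter.Tendsto (fun t : ℝ => c * t) Filter.atTop Filter.atTop :=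
          Filter.Tendsto.const_mul_atTop hcpos Filter.tendsto_id
        exact Real.tendsto_exp_atBot.comp (Filter.tendsto_neg_atTop_atBot.comp h1)
      simpa using this.const_mul |d 0|
    apply squeeze_zero' (Filter.Eventually.of_forall fun t => norm_nonneg _) _ hlim
    filter_upwards [Filter.eventually_ge_atTop (0:ℝ)] with t ht
    simpa using key t ht
end

section
/- (Proposition 4, course-error part; Case 3.) Suppose d, χ, χ^p : [0,∞) → ℝ with χ continuous, d and χ^p differentiable, d'(t) = V_g·sin(χ(t) − χ^p(t)), and χ'(t) = α·(χ^c(t) − χ(t)) wherever χ is differentiable. Define χ^d(t) = χ^p(t) − arctan(k₁·d(t)) and χ̃ = χ − χ^d, and let the command be χ^c = χ + χ^p'/α − (1/α)·(k₁/(1 + (k₁·d)²))·V_g·sin(χ − χ^p) − (β/α)·sign(χ̃) with β = σ/(1 + |χ̃|), σ > 0. Then at every t with χ̃(t) ≠ 0 one has χ̃'(t) = −σ·sign(χ̃(t))/(1 + |χ̃(t)|); consequently |χ̃| is monotonically nonincreasing and χ̃(t) = 0 for all t ≥ (|χ̃(0)| + χ̃(0)²/2)/σ. -/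
open Real Set

private lemma absHasDerivAt {e : ℝ → ℝ} {e' t : ℝ} (he : HasDerivAt e e' t)
    (hne : e t ≠ 0) :
    HasDerivAt (fun u => |e u|) (Real.sign (e t) * e') t := by
  rcases hne.lt_or_gt with h | h
  · have hev : ∀ᶠ u in nhds t, e u < 0 :=
      he.continuousAt.preimage_mem_nhds (Iio_mem_nhds h)
    have heq : (fun u => |e u|) =ᶠ[nhds t] fun u => -e u :=
      hev.mono fun u hu => abs_of_neg hu
    rw [Real.sign_of_neg h]
    have := he.neg.congr_of_eventuallyEq heq
    simpa using this
  · have hev : ∀ᶠ u in nhds t, 0 < e u :=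
      he.continuousAt.preimage_mem_nhds (Ioi_mem_nhds h)
    have heq : (fun u => |e u|) =ᶠ[nhds t] e :=
      hev.mono fun u hu => abs_of_pos hu
    rw [Real.sign_of_pos h]
    have := he.congr_of_eventuallyEq heq
    simpa using this

private lemma auxW {σ : ℝ} {e : ℝ → ℝ} {t : ℝ}
    (he : HasDerivAt e (-σ * Real.sign (e t) / (1 + |e t|)) t) (hne : e t ≠ 0) :
    HasDerivAt (fun u => |e u| + (e u) ^ 2 / 2) (-σ) t := by
  have habs := absHasDerivAt he hne
  have hsq : HasDerivAt (fun u => (e u) ^ 2 / 2)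
      (e t * (-σ * Real.sign (e t) / (1 + |e t|))) t := by
    have := (he.pow 2).div_const 2
    exact this.congr_deriv (by ring)
  have hsum := habs.add hsq
  refine hsum.congr_deriv ?_
  have hs2 : Real.sign (e t) * Real.sign (e t) = 1 := by
    rcases hne.lt_or_gt with h | h
    · rw [Real.sign_of_neg h]; ring
    · rw [Real.sign_of_pos h]; ring
  have hse : e t * Real.sign (e t) = |e t| := by
    rcases hne.lt_or_gt with h | h
    · rw [Real.sign_of_neg h, abs_of_neg h]; ring
    · rw [Real.sign_of_pos h, abs_of_pos h]; ring
  have hpos : (0:ℝ) < 1 + |e t| := by positivity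
  have hcalc : Real.sign (e t) * (-σ * Real.sign (e t) / (1 + |e t|))
      + e t * (-σ * Real.sign (e t) / (1 + |e t|))
      = -σ * (Real.sign (e t) * Real.sign (e t) + e t * Real.sign (e t)) / (1 + |e t|) := by
    ring
  rw [hcalc, hs2, hse, mul_div_assoc, div_self hpos.ne', mul_one]

private lemma auxB {σ : ℝ} {e : ℝ → ℝ}
    (hder : ∀ t, 0 ≤ t → e t ≠ 0 →
      HasDerivAt e (-σ * Real.sign (e t) / (1 + |e t|)) t)
    {s t : ℝ} (hs : 0 ≤ s) (hst : s ≤ t) (hne : ∀ u ∈ Icc s t, e u ≠ 0) :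
    |e t| + (e t) ^ 2 / 2 + σ * t = |e s| + (e s) ^ 2 / 2 + σ * s := by
  have hg : ∀ u ∈ Icc s t,
      HasDerivAt (fun u => |e u| + (e u) ^ 2 / 2 + σ * u) 0 u := by
    intro u hu
    have h0u : 0 ≤ u := hs.trans hu.1
    have h1 := (auxW (hder u h0u (hne u hu)) (hne u hu)).add
      ((hasDerivAt_id u).const_mul σ)
    exact h1.congr_deriv (by ring)
  have hcont : ContinuousOn (fun u => |e u| + (e u) ^ 2 / 2 + σ * u) (Icc s t) :=
    fun u hu => (hg u hu).continuousAt.continuousWithinAt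
  exact constant_of_has_deriv_right_zero hcont
    (fun x hx => (hg x (Ico_subset_Icc_self hx)).hasDerivWithinAt) t
    (right_mem_Icc.2 hst)

private lemma auxA {σ : ℝ} (hσ : 0 < σ) {e : ℝ → ℝ} (hcont : ContinuousOn e (Ici 0))
    (hder : ∀ t, 0 ≤ t → e t ≠ 0 →
      HasDerivAt e (-σ * Real.sign (e t) / (1 + |e t|)) t)
    {t₀ t₁ : ℝ} (ht₀ : 0 ≤ t₀) (h0 : e t₀ = 0) (h01 : t₀ ≤ t₁) : e t₁ = 0 := by
  by_contra hne1
  set Z := {u | u ∈ Icc t₀ t₁ ∧ e u = 0} with hZ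
  have ht₀Z : t₀ ∈ Z := ⟨left_mem_Icc.2 h01, h0⟩
  have hZne : Z.Nonempty := ⟨t₀, ht₀Z⟩
  have hZbdd : BddAbove Z := ⟨t₁, fun u hu => hu.1.2⟩
  set τ := sSup Z with hτdef
  have hττ : τ ∈ Icc t₀ t₁ :=
    ⟨le_csSup hZbdd ht₀Z, csSup_le hZne fun u hu => hu.1.2⟩
  have hτ0 : 0 ≤ τ := ht₀.trans hττ.1
  have heτ : e τ = 0 := by
    have hclo : τ ∈ closure Z := csSup_mem_closure hZne hZbdd
    have hZsub : Z ⊆ Ici 0 := fun u hu => ht₀.trans hu.1.1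
    have hNB : (nhdsWithin τ Z).NeBot := mem_closure_iff_nhdsWithin_neBot.1 hclo
    have h1 : Filter.Tendsto e (nhdsWithin τ Z) (nhds (e τ)) :=
      (hcont τ hτ0).mono_left (nhdsWithin_mono τ hZsub)
    have h2 : Filter.Tendsto e (nhdsWithin τ Z) (nhds 0) := by
      apply Filter.Tendsto.congr' _ (tendsto_const_nhds (α := ℝ))
      filter_upwards [self_mem_nhdsWithin] with u hu
      exact hu.2.symm
    exact tendsto_nhds_unique h1 h2
  have hτ1 : τ < t₁ := lt_of_le_of_ne hττ.2 fun h => hne1 (h ▸ heτ)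
  have hneIoc : ∀ u ∈ Ioc τ t₁, e u ≠ 0 := by
    intro u hu hu0
    exact absurd (le_csSup hZbdd ⟨⟨hττ.1.trans hu.1.le, hu.2⟩, hu0⟩) (not_le.2 hu.1)
  have hce : ContinuousOn e (Icc τ t₁) := hcont.mono fun u hu => hτ0.trans hu.1
  have htend : Filter.Tendsto e (nhdsWithin τ (Ioc τ t₁)) (nhds 0) := by
    have h1 : Filter.Tendsto e (nhdsWithin τ (Icc τ t₁)) (nhds (e τ)) :=
      hce τ (left_mem_Icc.2 hτ1.le)
    rw [heτ] at h1
    exact h1.mono_left (nhdsWithin_mono τ Ioc_subset_Icc_self)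
  have hNB : (nhdsWithin τ (Ioc τ t₁)).NeBot := by
    apply mem_closure_iff_nhdsWithin_neBot.1
    rw [closure_Ioc hτ1.ne]
    exact left_mem_Icc.2 hτ1.le
  rcases (Ne.lt_or_gt hne1) with h | h
  · -- e t₁ < 0 : e < 0 on Ioc, derivative positive, e strictly increasing
    have hneg : ∀ u ∈ Ioc τ t₁, e u < 0 := by
      intro u hu
      by_contra hle
      push_neg at hle
      have hlt : 0 < e u := lt_of_le_of_ne hle (Ne.symm (hneIoc u hu))
      obtain ⟨v, hv, hv0⟩ := intermediate_value_Icc' hu.2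
        (hce.mono (Icc_subset_Icc hu.1.le le_rfl))
        (show (0:ℝ) ∈ Icc (e t₁) (e u) from ⟨by linarith, by linarith⟩)
      exact hneIoc v ⟨hu.1.trans_le hv.1, hv.2⟩ hv0
    have hmono : StrictMonoOn e (Icc τ t₁) := by
      apply strictMonoOn_of_deriv_pos (convex_Icc τ t₁) hce
      intro u hu
      rw [interior_Icc] at hu
      have hu' : u ∈ Ioc τ t₁ := ⟨hu.1, hu.2.le⟩
      have hd := hder u (hτ0.trans hu.1.le) (hneIoc u hu')
      rw [hd.deriv, Real.sign_of_neg (hneg u hu')]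
      have h1 : (0:ℝ) < 1 + |e u| := by positivity
      have : -σ * (-1) = σ := by ring
      rw [this]
      positivity
    have hev : ∀ᶠ u in nhdsWithin τ (Ioc τ t₁), e u ≤ e t₁ := by
      filter_upwards [self_mem_nhdsWithin] with u hu
      rcases eq_or_lt_of_le hu.2 with h' | h'
      · exact le_of_eq (h' ▸ rfl)
      · exact (hmono ⟨hu.1.le, hu.2⟩ (right_mem_Icc.2 hτ1.le) h').le
    have : (0:ℝ) ≤ e t₁ := le_of_tendsto htend hev
    linarith
  · -- e t₁ > 0 : e > 0 on Ioc, derivative negative, e strictly decreasing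
    have hpos : ∀ u ∈ Ioc τ t₁, 0 < e u := by
      intro u hu
      by_contra hle
      push_neg at hle
      have hlt : e u < 0 := lt_of_le_of_ne hle (hneIoc u hu)
      obtain ⟨v, hv, hv0⟩ := intermediate_value_Icc hu.2
        (hce.mono (Icc_subset_Icc hu.1.le le_rfl))
        (show (0:ℝ) ∈ Icc (e u) (e t₁) from ⟨by linarith, by linarith⟩)
      exact hneIoc v ⟨hu.1.trans_le hv.1, hv.2⟩ hv0
    have hanti : StrictAntiOn e (Icc τ t₁) := by
      apply strictAntiOn_of_deriv_neg (convex_Icc τ t₁) hce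
      intro u hu
      rw [interior_Icc] at hu
      have hu' : u ∈ Ioc τ t₁ := ⟨hu.1, hu.2.le⟩
      have hd := hder u (hτ0.trans hu.1.le) (hneIoc u hu')
      rw [hd.deriv, Real.sign_of_pos (hpos u hu')]
      have h1 : (0:ℝ) < 1 + |e u| := by positivity
      apply div_neg_of_neg_of_pos _ h1
      linarith
    have hev : ∀ᶠ u in nhdsWithin τ (Ioc τ t₁), e t₁ ≤ e u := by
      filter_upwards [self_mem_nhdsWithin] with u hu
      rcases eq_or_lt_of_le hu.2 with h' | h'
      · exact le_of_eq (h' ▸ rfl)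
      · exact (hanti ⟨hu.1.le, hu.2⟩ (right_mem_Icc.2 hτ1.le) h').le
    have : e t₁ ≤ 0 := ge_of_tendsto htend hev
    linarith

/-- Proposition 4, course-error part (Case 3 of the switched vector field): with
`χ^d = χ^p - arctan(k₁ d)`, `χ̃ = χ - χ^d` and the sliding-mode command `χ^c`
(with `β = σ/(1 + |χ̃|)`), the course error obeys
`χ̃' = -σ·sign(χ̃)/(1 + |χ̃|)` off the sliding surface,
`|χ̃|` is nonincreasing, and `χ̃` vanishes after `(|χ̃(0)| + χ̃(0)²/2)/σ`. -/
theorem stmt9 (Vg α k₁ σ : ℝ) (hVg : 0 < Vg) (hα : 0 < α) (hk₁ : 0 < k₁) (hσ : 0 < σ)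
    (d χ χp χp' χc χd : ℝ → ℝ)
    (hχcont : ContinuousOn χ (Ici 0))
    (hd : ∀ t, 0 ≤ t → HasDerivAt d (Vg * Real.sin (χ t - χp t)) t)
    (hχp : ∀ t, 0 ≤ t → HasDerivAt χp (χp' t) t)
    (hχd : χd = fun t => χp t - Real.arctan (k₁ * d t))
    (hχ : ∀ t, 0 ≤ t → χ t - χd t ≠ 0 → HasDerivAt χ (α * (χc t - χ t)) t)
    (hχc : χc = fun t => χ t + χp' t / α
        - (1 / α) * (k₁ / (1 + (k₁ * d t) ^ 2)) * Vg * Real.sin (χ t - χp t)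
        - (σ / (1 + |χ t - χd t|) / α) * Real.sign (χ t - χd t)) :
    (∀ t, 0 ≤ t → χ t - χd t ≠ 0 →
      HasDerivAt (fun s => χ s - χd s)
        (-σ * Real.sign (χ t - χd t) / (1 + |χ t - χd t|)) t) ∧
      AntitoneOn (fun t => |χ t - χd t|) (Ici 0) ∧
      ∀ t, (|χ 0 - χd 0| + (χ 0 - χd 0) ^ 2 / 2) / σ ≤ t → χ t - χd t = 0 := by
  set e : ℝ → ℝ := fun s => χ s - χd s with he
  have hder : ∀ t, 0 ≤ t → e t ≠ 0 →
      HasDerivAt e (-σ * Real.sign (e t) / (1 + |e t|)) t := by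
    intro t ht hne
    have hdd := hd t ht
    have hχpd := hχp t ht
    have harc : HasDerivAt (fun u => Real.arctan (k₁ * d u))
        (1 / (1 + (k₁ * d t) ^ 2) * (k₁ * (Vg * Real.sin (χ t - χp t)))) t := by
      have := (Real.hasDerivAt_arctan (k₁ * d t)).comp t (hdd.const_mul k₁)
      exact this.congr_deriv (by ring)
    have hχdd : HasDerivAt χd
        (χp' t - 1 / (1 + (k₁ * d t) ^ 2) * (k₁ * (Vg * Real.sin (χ t - χp t)))) t := by
      rw [hχd]; exact hχpd.sub harc
    have hχder := hχ t ht hne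
    have hsum := hχder.sub hχdd
    refine hsum.congr_deriv ?_
    rw [hχc]
    have h1 : (0:ℝ) < 1 + (k₁ * d t) ^ 2 := by positivity
    have h2 : (0:ℝ) < 1 + |e t| := by positivity
    simp only [he]
    field_simp
    ring
  have hcontE : ContinuousOn e (Ici 0) := by
    apply hχcont.sub
    rw [hχd]
    intro t ht
    exact (((hχp t ht).continuousAt).sub
      ((Real.continuous_arctan.continuousAt).comp
        (continuousAt_const.mul (hd t ht).continuousAt))).continuousWithinAt
  have hkey : ∀ s t : ℝ, 0 ≤ s → s ≤ t →
      |e t| + (e t) ^ 2 / 2 ≤ max (|e s| + (e s) ^ 2 / 2 - σ * (t - s)) 0 := by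
    intro s t hs hst
    by_cases hz : ∃ u ∈ Icc s t, e u = 0
    · obtain ⟨u, hu, hu0⟩ := hz
      have het : e t = 0 := auxA hσ hcontE hder (hs.trans hu.1) hu0 hu.2
      rw [het]
      simpa using le_max_right _ (0:ℝ)
    · push_neg at hz
      have h := auxB hder hs hst hz
      exact le_max_of_le_left (by linarith)
  refine ⟨hder, ?_, ?_⟩
  · intro a ha b hb hab
    have h := hkey a b ha hab
    have h0 : (0:ℝ) ≤ |e a| + (e a) ^ 2 / 2 := by positivity
    have h1 : |e b| + (e b) ^ 2 / 2 ≤ |e a| + (e a) ^ 2 / 2 := by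
      rcases le_max_iff.1 h with h' | h'
      · nlinarith
      · linarith
    show |e b| ≤ |e a|
    by_contra hgt
    push_neg at hgt
    have h3 : |e a| ^ 2 ≤ |e b| ^ 2 := pow_le_pow_left₀ (abs_nonneg (e a)) hgt.le 2
    rw [sq_abs, sq_abs] at h3
    simp only [he] at h1 h3 hgt
    linarith
  · intro t ht
    have hW0 : (0:ℝ) ≤ |e 0| + (e 0) ^ 2 / 2 := by positivity
    have ht0 : 0 ≤ t := le_trans (div_nonneg hW0 hσ.le) ht
    have h := hkey 0 t le_rfl ht0
    have h2 : |e 0| + (e 0) ^ 2 / 2 ≤ σ * t := by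
      rw [div_le_iff₀ hσ] at ht
      linarith [ht]
    have h3 : |e t| + (e t) ^ 2 / 2 ≤ 0 := by
      rcases le_max_iff.1 h with h' | h'
      · linarith
      · linarith
    have h4 : |e t| = 0 := by nlinarith [abs_nonneg (e t), sq_nonneg (e t)]
    exact abs_eq_zero.1 h4
end

section
/- Let k₁ > 0 and V_g > 0. The function f : [0,∞) → ℝ, f(d) = k₁²·V_g·d/(1 + (k₁·d)²)^{3/2}, attains its maximum value (2/(3√3))·k₁·V_g, and this maximum is attained exactly at d = 1/(√2·k₁). -/
open Real

lemma rpow32 (a : ℝ) (ha : 0 ≤ a) : a ^ ((3 : ℝ) / 2) = Real.sqrt (a ^ 3) := by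
  rw [Real.sqrt_eq_rpow, ← Real.rpow_natCast a 3, ← Real.rpow_mul ha]
  norm_num

/-- Curvature analysis for the linear branch (i = 1): the turn-rate deviation
`f(d) = k₁²·V_g·d/(1 + (k₁ d)²)^{3/2}` on `[0,∞)` attains its maximum
`(2/(3√3))·k₁·V_g` exactly at `d = 1/(√2·k₁)`. -/
theorem stmt12 (k₁ Vg : ℝ) (hk₁ : 0 < k₁) (hVg : 0 < Vg)
    (f : ℝ → ℝ)
    (hf : f = fun d => k₁ ^ 2 * Vg * d / (1 + (k₁ * d) ^ 2) ^ ((3 : ℝ) / 2)) :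
    (∀ d, 0 ≤ d → f d ≤ 2 / (3 * Real.sqrt 3) * k₁ * Vg) ∧
      f (1 / (Real.sqrt 2 * k₁)) = 2 / (3 * Real.sqrt 3) * k₁ * Vg ∧
      ∀ d, 0 ≤ d → f d = 2 / (3 * Real.sqrt 3) * k₁ * Vg → d = 1 / (Real.sqrt 2 * k₁) := by
  subst hf
  have h2 : (0:ℝ) < Real.sqrt 2 := Real.sqrt_pos.mpr (by norm_num)
  have h3 : (0:ℝ) < Real.sqrt 3 := Real.sqrt_pos.mpr (by norm_num)
  have h2sq : Real.sqrt 2 ^ 2 = 2 := Real.sq_sqrt (by norm_num)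
  have h3sq : Real.sqrt 3 ^ 2 = 3 := Real.sq_sqrt (by norm_num)
  refine ⟨?_, ?_, ?_⟩
  · -- inequality
    intro d hd
    simp only
    have hx0 : 0 ≤ k₁ * d := mul_nonneg hk₁.le hd
    have ha : (0:ℝ) < 1 + (k₁ * d) ^ 2 := by positivity
    rw [rpow32 _ ha.le]
    have hs : 0 < Real.sqrt ((1 + (k₁ * d) ^ 2) ^ 3) := Real.sqrt_pos.mpr (by positivity)
    have hssq : Real.sqrt ((1 + (k₁ * d) ^ 2) ^ 3) ^ 2 = (1 + (k₁ * d) ^ 2) ^ 3 :=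
      Real.sq_sqrt (by positivity)
    set s := Real.sqrt ((1 + (k₁ * d) ^ 2) ^ 3) with hsdef
    have key : 3 * Real.sqrt 3 * (k₁ * d) ≤ 2 * s := by
      have hineq : 27 * (k₁ * d) ^ 2 ≤ 4 * (1 + (k₁ * d) ^ 2) ^ 3 := by
        nlinarith [sq_nonneg (2 * (k₁ * d) ^ 2 - 1), sq_nonneg (k₁ * d)]
      have e1 : Real.sqrt (27 * (k₁ * d) ^ 2) = 3 * Real.sqrt 3 * (k₁ * d) := by
        rw [show 27 * (k₁ * d) ^ 2 = (3 * Real.sqrt 3 * (k₁ * d)) ^ 2 by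
          linear_combination 9 * (k₁ * d) ^ 2 * h3sq.symm]
        exact Real.sqrt_sq (by positivity)
      have e2 : Real.sqrt (4 * (1 + (k₁ * d) ^ 2) ^ 3) = 2 * s := by
        rw [show 4 * (1 + (k₁ * d) ^ 2) ^ 3 = (2 * s) ^ 2 by linear_combination 4 * hssq.symm]
        exact Real.sqrt_sq (by positivity)
      calc 3 * Real.sqrt 3 * (k₁ * d) = Real.sqrt (27 * (k₁ * d) ^ 2) := e1.symm
        _ ≤ Real.sqrt (4 * (1 + (k₁ * d) ^ 2) ^ 3) := Real.sqrt_le_sqrt hineq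
        _ = 2 * s := e2
    rw [div_le_iff₀ hs, div_mul_eq_mul_div, div_mul_eq_mul_div, div_mul_eq_mul_div,
      le_div_iff₀ (by positivity)]
    nlinarith [mul_le_mul_of_nonneg_left key (by positivity : (0:ℝ) ≤ k₁ * Vg)]
  · -- equality at d₀
    have hk : k₁ ≠ 0 := hk₁.ne'
    have hxd : k₁ * (1 / (Real.sqrt 2 * k₁)) = 1 / Real.sqrt 2 := by
      rw [mul_comm (Real.sqrt 2) k₁]; field_simp
    simp only
    rw [hxd]
    have ha : (1 : ℝ) + (1 / Real.sqrt 2) ^ 2 = 3 / 2 := by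
      rw [div_pow, one_pow, h2sq]; norm_num
    rw [ha, rpow32 _ (by norm_num)]
    have hsq2 : (3 * Real.sqrt 3 / (2 * Real.sqrt 2)) ^ 2 = (27:ℝ)/8 := by
      rw [div_pow, mul_pow, mul_pow, h2sq, h3sq]; norm_num
    have hs : Real.sqrt ((3 / 2 : ℝ) ^ 3) = 3 * Real.sqrt 3 / (2 * Real.sqrt 2) := by
      rw [show ((3:ℝ)/2) ^ 3 = (27:ℝ)/8 by norm_num, ← hsq2]
      exact Real.sqrt_sq (by positivity)
    rw [hs]
    rw [div_eq_iff (by positivity : (3 * Real.sqrt 3 / (2 * Real.sqrt 2)) ≠ 0)]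
    field_simp
  · -- uniqueness
    intro d hd heq
    simp only at heq
    have hx0 : 0 ≤ k₁ * d := mul_nonneg hk₁.le hd
    have ha : (0:ℝ) < 1 + (k₁ * d) ^ 2 := by positivity
    rw [rpow32 _ ha.le] at heq
    have hs : 0 < Real.sqrt ((1 + (k₁ * d) ^ 2) ^ 3) := Real.sqrt_pos.mpr (by positivity)
    have hssq : Real.sqrt ((1 + (k₁ * d) ^ 2) ^ 3) ^ 2 = (1 + (k₁ * d) ^ 2) ^ 3 :=
      Real.sq_sqrt (by positivity)
    set s := Real.sqrt ((1 + (k₁ * d) ^ 2) ^ 3) with hsdef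
    rw [div_eq_iff hs.ne'] at heq
    have heq2 : 3 * Real.sqrt 3 * (k₁ * d) = 2 * s := by
      have hkv : (0:ℝ) < k₁ * Vg := by positivity
      have h' : k₁ * Vg * (3 * Real.sqrt 3 * (k₁ * d)) = k₁ * Vg * (2 * s) := by
        field_simp at heq
        linear_combination (k₁ * Vg) * heq
      exact mul_left_cancel₀ hkv.ne' h'
    have hsq : 27 * (k₁ * d) ^ 2 = 4 * (1 + (k₁ * d) ^ 2) ^ 3 := by
      linear_combination (3 * Real.sqrt 3 * (k₁ * d) + 2 * s) * heq2
        - 9 * (k₁ * d) ^ 2 * h3sq + 4 * hssq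
    have hfac : (2 * (k₁ * d) ^ 2 - 1) ^ 2 * ((k₁ * d) ^ 2 + 4) = 0 := by
      linear_combination -hsq
    have hx2 : (k₁ * d) ^ 2 = 1 / 2 := by
      have h4 : (0:ℝ) < (k₁ * d) ^ 2 + 4 := by positivity
      have hz : (2 * (k₁ * d) ^ 2 - 1) ^ 2 = 0 := by
        rcases mul_eq_zero.mp hfac with h | h
        · exact h
        · linarith
      have := (pow_eq_zero_iff two_ne_zero).mp hz
      linarith
    have hxv : k₁ * d = 1 / Real.sqrt 2 := by
      have h := (Real.sqrt_sq hx0).symm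
      rw [hx2, show (1:ℝ)/2 = 2⁻¹ by norm_num, Real.sqrt_inv] at h
      rw [h, one_div]
    have hd' : d = (k₁ * d) / k₁ := by field_simp
    rw [hd', hxv]
    rw [one_div, one_div, mul_inv, div_eq_mul_inv]
end

section
/- Let k₃ > 0 and V_g > 0. The function g : [0,∞) → ℝ, g(d) = 3·k₃²·V_g·d⁵/(1 + (k₃·d³)²)^{3/2}, attains its maximum value (2^{4/3}·5^{5/6}/9)·V_g·k₃^{1/3}, and this maximum is attained exactly at d = 5^{1/6}/(2^{1/3}·k₃^{1/3}). -/
open Real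

private lemma key_fact (s : ℝ) :
    800000 * (1 + s) ^ 9 - 387420489 * s ^ 5 =
      (4 * s - 5) ^ 2 * (50000 * s ^ 7 + 575000 * s ^ 6 + 3159375 * s ^ 5 +
        11200000 * s ^ 4 + 5149696 * s ^ 3 + 1674240 * s ^ 2 + 339200 * s + 32000) := by
  ring

private lemma key_pos (s : ℝ) (hs : 0 ≤ s) :
    0 < 50000 * s ^ 7 + 575000 * s ^ 6 + 3159375 * s ^ 5 +
      11200000 * s ^ 4 + 5149696 * s ^ 3 + 1674240 * s ^ 2 + 339200 * s + 32000 := by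
  have h7 := pow_nonneg hs 7
  have h6 := pow_nonneg hs 6
  have h5 := pow_nonneg hs 5
  have h4 := pow_nonneg hs 4
  have h3 := pow_nonneg hs 3
  have h2 := pow_nonneg hs 2
  nlinarith

private lemma key_le (s : ℝ) (hs : 0 ≤ s) :
    387420489 * s ^ 5 ≤ 800000 * (1 + s) ^ 9 := by
  nlinarith [key_fact s, key_pos s hs, sq_nonneg (4 * s - 5),
    mul_nonneg (sq_nonneg (4 * s - 5)) (key_pos s hs).le]

private lemma key_eq (s : ℝ) (hs : 0 ≤ s)
    (h : 387420489 * s ^ 5 = 800000 * (1 + s) ^ 9) : s = 5 / 4 := by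
  have hf := key_fact s
  have hp := key_pos s hs
  have hsq : (4 * s - 5) ^ 2 = 0 := by
    by_contra hne
    have : 0 < (4 * s - 5) ^ 2 := lt_of_le_of_ne (sq_nonneg _) (Ne.symm hne)
    nlinarith
  have : 4 * s - 5 = 0 := by
    exact pow_eq_zero_iff (n := 2) (by norm_num) |>.mp hsq
  linarith

/-- Curvature analysis for the cubic branch (i = 3): the turn-rate deviation
`g(d) = 3·k₃²·V_g·d⁵/(1 + (k₃ d³)²)^{3/2}` on `[0,∞)` attains its maximum
`(2^{4/3}·5^{5/6}/9)·V_g·k₃^{1/3}` exactly at `d = 5^{1/6}/(2^{1/3}·k₃^{1/3})`. -/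
theorem stmt13 (k₃ Vg : ℝ) (hk₃ : 0 < k₃) (hVg : 0 < Vg)
    (g : ℝ → ℝ)
    (hg : g = fun d => 3 * k₃ ^ 2 * Vg * d ^ 5 / (1 + (k₃ * d ^ 3) ^ 2) ^ ((3 : ℝ) / 2)) :
    (∀ d, 0 ≤ d →
        g d ≤ (2 : ℝ) ^ ((4 : ℝ) / 3) * (5 : ℝ) ^ ((5 : ℝ) / 6) / 9 * Vg * k₃ ^ ((1 : ℝ) / 3)) ∧
      g ((5 : ℝ) ^ ((1 : ℝ) / 6) / ((2 : ℝ) ^ ((1 : ℝ) / 3) * k₃ ^ ((1 : ℝ) / 3)))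
        = (2 : ℝ) ^ ((4 : ℝ) / 3) * (5 : ℝ) ^ ((5 : ℝ) / 6) / 9 * Vg * k₃ ^ ((1 : ℝ) / 3) ∧
      ∀ d, 0 ≤ d →
        g d = (2 : ℝ) ^ ((4 : ℝ) / 3) * (5 : ℝ) ^ ((5 : ℝ) / 6) / 9 * Vg * k₃ ^ ((1 : ℝ) / 3) →
        d = (5 : ℝ) ^ ((1 : ℝ) / 6) / ((2 : ℝ) ^ ((1 : ℝ) / 3) * k₃ ^ ((1 : ℝ) / 3)) := by
  subst hg
  beta_reduce
  set a : ℝ := (2 : ℝ) ^ ((1 : ℝ) / 3) with ha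
  set b : ℝ := (5 : ℝ) ^ ((1 : ℝ) / 6) with hb
  set c : ℝ := k₃ ^ ((1 : ℝ) / 3) with hc
  have hapos : 0 < a := rpow_pos_of_pos (by norm_num) _
  have hbpos : 0 < b := rpow_pos_of_pos (by norm_num) _
  have hcpos : 0 < c := rpow_pos_of_pos hk₃ _
  have ha3 : a ^ 3 = 2 := by
    rw [ha, ← rpow_natCast ((2 : ℝ) ^ ((1 : ℝ) / 3)) 3, ← rpow_mul (by norm_num : (0:ℝ) ≤ 2)]
    norm_num
  have hb6 : b ^ 6 = 5 := by
    rw [hb, ← rpow_natCast ((5 : ℝ) ^ ((1 : ℝ) / 6)) 6, ← rpow_mul (by norm_num : (0:ℝ) ≤ 5)]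
    norm_num
  have hc3 : c ^ 3 = k₃ := by
    rw [hc, ← rpow_natCast (k₃ ^ ((1 : ℝ) / 3)) 3, ← rpow_mul hk₃.le]
    norm_num
  have hA : (2 : ℝ) ^ ((4 : ℝ) / 3) * (5 : ℝ) ^ ((5 : ℝ) / 6) / 9 * Vg * c
      = a ^ 4 * b ^ 5 / 9 * Vg * c := by
    rw [ha, hb, ← rpow_natCast ((2 : ℝ) ^ ((1 : ℝ) / 3)) 4,
      ← rpow_natCast ((5 : ℝ) ^ ((1 : ℝ) / 6)) 5,
      ← rpow_mul (by norm_num : (0:ℝ) ≤ 2), ← rpow_mul (by norm_num : (0:ℝ) ≤ 5)]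
    norm_num
  rw [hA]
  set A : ℝ := a ^ 4 * b ^ 5 / 9 * Vg * c with hAdef
  have hApos : 0 < A := by positivity
  have ha24 : a ^ 24 = 256 := by
    rw [show (24 : ℕ) = 3 * 8 by norm_num, pow_mul, ha3]; norm_num
  have hb30 : b ^ 30 = 3125 := by
    rw [show (30 : ℕ) = 6 * 5 by norm_num, pow_mul, hb6]; norm_num
  have hc6 : c ^ 6 = k₃ ^ 2 := by
    rw [show (6 : ℕ) = 3 * 2 by norm_num, pow_mul, hc3]
  have hA6 : A ^ 6 = 800000 * Vg ^ 6 * k₃ ^ 2 / 531441 := by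
    have : A ^ 6 = a ^ 24 * b ^ 30 * Vg ^ 6 * c ^ 6 / 531441 := by rw [hAdef]; ring
    rw [this, ha24, hb30, hc6]; ring
  -- general sixth-power computation for g d
  have hg6 : ∀ d : ℝ,
      (3 * k₃ ^ 2 * Vg * d ^ 5 / (1 + (k₃ * d ^ 3) ^ 2) ^ ((3 : ℝ) / 2)) ^ 6
        = 729 * k₃ ^ 12 * Vg ^ 6 * d ^ 30 / (1 + k₃ ^ 2 * d ^ 6) ^ 9 := by
    intro d
    have hx : (0 : ℝ) ≤ 1 + (k₃ * d ^ 3) ^ 2 := by positivity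
    have hw6 : ((1 + (k₃ * d ^ 3) ^ 2) ^ ((3 : ℝ) / 2)) ^ 6
        = (1 + k₃ ^ 2 * d ^ 6) ^ 9 := by
      rw [← rpow_natCast ((1 + (k₃ * d ^ 3) ^ 2) ^ ((3 : ℝ) / 2)) 6, ← rpow_mul hx]
      norm_num
      ring
    rw [div_pow, hw6]
    ring_nf
  have hgnn : ∀ d : ℝ, 0 ≤ d →
      0 ≤ 3 * k₃ ^ 2 * Vg * d ^ 5 / (1 + (k₃ * d ^ 3) ^ 2) ^ ((3 : ℝ) / 2) := by
    intro d hd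
    have hx : (0 : ℝ) < (1 + (k₃ * d ^ 3) ^ 2) ^ ((3 : ℝ) / 2) :=
      rpow_pos_of_pos (by positivity) _
    positivity
  refine ⟨?_, ?_, ?_⟩
  · -- inequality
    intro d hd
    have hx9 : (0 : ℝ) < (1 + k₃ ^ 2 * d ^ 6) ^ 9 := by positivity
    apply le_of_pow_le_pow_left₀ (n := 6) (by norm_num) hApos.le
    rw [hg6 d, hA6]
    rw [div_le_div_iff₀ hx9 (by norm_num)]
    have hs : (0 : ℝ) ≤ k₃ ^ 2 * d ^ 6 := by positivity
    have hkey := mul_le_mul_of_nonneg_left (key_le (k₃ ^ 2 * d ^ 6) hs)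
      (show (0 : ℝ) ≤ Vg ^ 6 * k₃ ^ 2 by positivity)
    nlinarith [hkey]
  · -- value at d₀
    have hd0c : (b / (a * c)) ^ 3 = b ^ 3 / (2 * k₃) := by
      rw [div_pow, mul_pow, ha3, hc3]
    have hb3sq : (b ^ 3) ^ 2 = 5 := by rw [← pow_mul]; exact hb6
    have hx : 1 + (k₃ * (b / (a * c)) ^ 3) ^ 2 = 9 / 4 := by
      rw [hd0c]
      field_simp
      nlinarith [hb3sq]
    have h94 : ((9 : ℝ) / 4) ^ ((3 : ℝ) / 2) = 27 / 8 := by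
      rw [show ((9 : ℝ) / 4) = ((3 : ℝ) / 2) ^ (2 : ℕ) by norm_num,
        ← rpow_natCast ((3 : ℝ) / 2) 2, ← rpow_mul (by norm_num : (0:ℝ) ≤ (3:ℝ)/2),
        show ((2 : ℕ) : ℝ) * ((3 : ℝ) / 2) = ((3 : ℕ) : ℝ) by norm_num, rpow_natCast]
      norm_num
    show 3 * k₃ ^ 2 * Vg * (b / (a * c)) ^ 5 /
        (1 + (k₃ * (b / (a * c)) ^ 3) ^ 2) ^ ((3 : ℝ) / 2) = A
    rw [hx, h94, hAdef]
    have ha9 : a ^ 9 = 8 := by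
      rw [show (9 : ℕ) = 3 * 3 by norm_num, pow_mul, ha3]; norm_num
    rw [← hc3]
    field_simp
    linear_combination (-27) * ha9
  · -- uniqueness
    intro d hd hEq
    have h6 : (3 * k₃ ^ 2 * Vg * d ^ 5 / (1 + (k₃ * d ^ 3) ^ 2) ^ ((3 : ℝ) / 2)) ^ 6
        = A ^ 6 := by beta_reduce at hEq; rw [hEq]
    rw [hg6 d, hA6] at h6
    have hx9 : (0 : ℝ) < (1 + k₃ ^ 2 * d ^ 6) ^ 9 := by positivity
    have hcross : 729 * k₃ ^ 12 * Vg ^ 6 * d ^ 30 * 531441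
        = 800000 * Vg ^ 6 * k₃ ^ 2 * (1 + k₃ ^ 2 * d ^ 6) ^ 9 := by
      rw [div_eq_div_iff hx9.ne' (by norm_num : (531441:ℝ) ≠ 0)] at h6
      linarith [h6]
    have hs : (0 : ℝ) ≤ k₃ ^ 2 * d ^ 6 := by positivity
    have hseq : 387420489 * (k₃ ^ 2 * d ^ 6) ^ 5 = 800000 * (1 + k₃ ^ 2 * d ^ 6) ^ 9 := by
      have hVk : (0 : ℝ) < Vg ^ 6 * k₃ ^ 2 := by positivity
      have : Vg ^ 6 * k₃ ^ 2 * (387420489 * (k₃ ^ 2 * d ^ 6) ^ 5)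
          = Vg ^ 6 * k₃ ^ 2 * (800000 * (1 + k₃ ^ 2 * d ^ 6) ^ 9) := by
        linear_combination hcross
      exact mul_left_cancel₀ (ne_of_gt hVk) this
    have hs54 : k₃ ^ 2 * d ^ 6 = 5 / 4 := key_eq _ hs hseq
    have hd6 : d ^ 6 = 5 / (4 * k₃ ^ 2) := by
      field_simp at hs54 ⊢
      linarith [hs54]
    have hd0nn : (0 : ℝ) ≤ b / (a * c) := by positivity
    have hd06 : (b / (a * c)) ^ 6 = 5 / (4 * k₃ ^ 2) := by
      rw [div_pow, mul_pow, hb6, hc6]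
      have ha6 : a ^ 6 = 4 := by
        rw [show (6 : ℕ) = 3 * 2 by norm_num, pow_mul, ha3]; norm_num
      rw [ha6]
    have h66 : d ^ 6 = (b / (a * c)) ^ 6 := by rw [hd6, hd06]
    have e1 : d = (d ^ 6) ^ ((1 : ℝ) / 6) := by
      rw [← rpow_natCast d 6, ← rpow_mul hd]
      norm_num
    have e2 : b / (a * c) = ((b / (a * c)) ^ 6) ^ ((1 : ℝ) / 6) := by
      rw [← rpow_natCast (b / (a * c)) 6, ← rpow_mul hd0nn]
      norm_num
    rw [e1, h66, ← e2]
end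

section
/- (Curvature feasibility condition.) Let V_g, k₁, k₃, κ_max > 0 and c ≥ 0 satisfy max{2k₁/(3√3), (2^{4/3}·5^{5/6}/9)·k₃^{1/3}} ≤ κ_max − c/V_g. Let χ^p : [0,∞) → ℝ be differentiable with |χ^p'(t)| ≤ c for all t, let i ∈ {1, 3} with corresponding gain k_i, and let d : [0,∞) → ℝ be differentiable with d'(t) = −V_g·k_i·d(t)^i/√(1 + (k_i·d(t)^i)²). Then the desired course χ^d(t) = χ^p(t) − arctan(k_i·d(t)^i) satisfies |dχ^d/dt(t)| ≤ V_g·κ_max for all t ≥ 0; i.e., the curvature of the commanded path never exceeds κ_max. -/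
open Real

lemma sq_le_imp' (a b : ℝ) (hb : 0 ≤ b) (h : a^2 ≤ b^2) : a ≤ b := by nlinarith

lemma lem1' (u : ℝ) :
    u / ((1 + u^2) * Real.sqrt (1 + u^2)) ≤ 2/(3*Real.sqrt 3) := by
  have hS0 : (0:ℝ) < 1 + u^2 := by positivity
  have hsS : 0 < Real.sqrt (1 + u^2) := Real.sqrt_pos.mpr hS0
  rw [div_le_div_iff₀ (by positivity) (by positivity)]
  apply sq_le_imp' _ _ (by positivity)
  have e1 : Real.sqrt 3 ^ 2 = 3 := Real.sq_sqrt (by norm_num)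
  have e2 : Real.sqrt (1 + u^2) ^ 2 = 1 + u^2 := Real.sq_sqrt hS0.le
  have key : 27 * u^2 ≤ 4 * (1+u^2)^3 := by
    nlinarith [sq_nonneg (2*u^2-1), sq_nonneg u]
  calc (u * (3 * Real.sqrt 3))^2 = 27 * u^2 * (Real.sqrt 3 ^2 / 3) := by ring
    _ = 27 * u^2 := by rw [e1]; ring
    _ ≤ 4 * (1+u^2)^3 := key
    _ = (2 * ((1 + u^2) * Real.sqrt (1+u^2)))^2 := by
        rw [mul_pow, mul_pow, e2]; ring

lemma lem3' (u : ℝ) (hu : 0 ≤ u) :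
    3 * u^5 / ((1 + u^6) * Real.sqrt (1 + u^6))
      ≤ (2:ℝ)^((4:ℝ)/3) * (5:ℝ)^((5:ℝ)/6) / 9 := by
  have hS0 : (0:ℝ) < 1 + u^6 := by positivity
  have hsS : 0 < Real.sqrt (1 + u^6) := Real.sqrt_pos.mpr hS0
  have h2 : (0:ℝ) < (2:ℝ)^((4:ℝ)/3) := Real.rpow_pos_of_pos (by norm_num) _
  have h5 : (0:ℝ) < (5:ℝ)^((5:ℝ)/6) := Real.rpow_pos_of_pos (by norm_num) _
  rw [div_le_div_iff₀ (by positivity) (by norm_num)]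
  apply (pow_le_pow_iff_left₀ (by positivity) (by positivity) (show 6 ≠ 0 by norm_num)).mp
  have e2 : ((2:ℝ)^((4:ℝ)/3))^(6:ℕ) = 256 := by
    rw [← Real.rpow_natCast ((2:ℝ)^((4:ℝ)/3)) 6, ← Real.rpow_mul (by norm_num)]; norm_num
  have e5 : ((5:ℝ)^((5:ℝ)/6))^(6:ℕ) = 3125 := by
    rw [← Real.rpow_natCast ((5:ℝ)^((5:ℝ)/6)) 6, ← Real.rpow_mul (by norm_num)]; norm_num
  have eS : Real.sqrt (1 + u^6) ^ (6:ℕ) = (1+u^6)^3 := by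
    rw [show (6:ℕ) = 2*3 by norm_num, pow_mul, Real.sq_sqrt hS0.le]
  have key : 387420489 * (u^6)^5 ≤ 800000 * (1+u^6)^9 := by
    have hr : (0:ℝ) ≤ 32000 + 339200*u^6 + 1674240*(u^6)^2 + 5149696*(u^6)^3 + 11200000*(u^6)^4 + 3159375*(u^6)^5 + 575000*(u^6)^6 + 50000*(u^6)^7 := by positivity
    nlinarith [mul_nonneg (sq_nonneg (4*u^6-5)) hr]
  calc (3*u^5*9)^(6:ℕ) = 387420489 * (u^6)^5 := by ring
    _ ≤ 800000 * (1+u^6)^9 := key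
    _ = ((2:ℝ)^((4:ℝ)/3) * (5:ℝ)^((5:ℝ)/6) * ((1+u^6) * Real.sqrt (1+u^6)))^(6:ℕ) := by
        rw [mul_pow, mul_pow, mul_pow, e2, e5, eS]; ring

/-- Curvature feasibility condition: if the gains `k₁, k₃` satisfy
`max{2k₁/(3√3), (2^{4/3}·5^{5/6}/9)·k₃^{1/3}} ≤ κ_max - c/V_g` with `|χ^p'| ≤ c`,
then along the sliding surface of either branch (`i = 1` with gain `k₁`, or
`i = 3` with gain `k₃`), the desired course `χ^d = χ^p - arctan(k_i d^i)` has
turn rate bounded by `V_g·κ_max`, i.e. the commanded path curvature never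
exceeds `κ_max`. -/
theorem stmt14 (Vg k₁ k₃ κmax c : ℝ) (hVg : 0 < Vg) (hk₁ : 0 < k₁) (hk₃ : 0 < k₃)
    (hκ : 0 < κmax) (hc : 0 ≤ c)
    (hfeas : max (2 * k₁ / (3 * Real.sqrt 3))
        ((2 : ℝ) ^ ((4 : ℝ) / 3) * (5 : ℝ) ^ ((5 : ℝ) / 6) / 9 * k₃ ^ ((1 : ℝ) / 3))
      ≤ κmax - c / Vg)
    (χp χp' d : ℝ → ℝ)
    (hχp : ∀ t, HasDerivAt χp (χp' t) t)
    (hχpb : ∀ t, 0 ≤ t → |χp' t| ≤ c)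
    (i : ℕ) (ki : ℝ) (hik : (i = 1 ∧ ki = k₁) ∨ (i = 3 ∧ ki = k₃))
    (hd : ∀ t, HasDerivAt d (-(Vg * ki * d t ^ i / Real.sqrt (1 + (ki * d t ^ i) ^ 2))) t) :
    ∀ t, 0 ≤ t →
      |deriv (fun s => χp s - Real.arctan (ki * d s ^ i)) t| ≤ Vg * κmax := by
  intro t ht
  set S := 1 + (ki * d t ^ i) ^ 2 with hSdef
  have hS0 : (0:ℝ) < S := by positivity
  have hsS : 0 < Real.sqrt S := Real.sqrt_pos.mpr hS0
  have harc : HasDerivAt (fun s => Real.arctan (ki * d s ^ i))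
      (1 / S * (ki * ((i:ℝ) * d t ^ (i-1) * (-(Vg * ki * d t ^ i / Real.sqrt S))))) t :=
    (((hd t).pow i).const_mul ki).arctan
  have hg : HasDerivAt (fun s => χp s - Real.arctan (ki * d s ^ i)) _ t := (hχp t).sub harc
  rw [hg.deriv]
  set T := 1 / S * (ki * ((i:ℝ) * d t ^ (i-1) * (-(Vg * ki * d t ^ i / Real.sqrt S)))) with hTdef
  have habs : |χp' t - T| ≤ c + |T| := by
    calc |χp' t - T| ≤ |χp' t| + |T| := abs_sub _ _
      _ ≤ c + |T| := by linarith [hχpb t ht]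
  have hkey : |T| ≤ Vg * (κmax - c / Vg) := by
    rcases hik with ⟨hi, hki⟩ | ⟨hi, hki⟩
    · -- i = 1
      subst hi hki
      have hki0 : 0 < ki := hk₁
      have hT : T = -(Vg * ki^2 / (S * Real.sqrt S) * d t) := by
        rw [hTdef]
        field_simp
        ring
      have habsT : |T| = Vg * ki^2 / (S * Real.sqrt S) * |d t| := by
        rw [hT, abs_neg, abs_mul, abs_of_nonneg (by positivity : (0:ℝ) ≤ Vg * ki^2 / (S * Real.sqrt S))]
      have hueq : (ki * d t ^ 1)^2 = (ki * |d t|)^2 := by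
        rw [mul_pow, mul_pow, pow_one, sq_abs]
      have hSeq : S = 1 + (ki * |d t|)^2 := by rw [hSdef, hueq]
      have hb := lem1' (ki * |d t|)
      rw [habsT, hSeq]
      calc Vg * ki^2 / ((1 + (ki*|d t|)^2) * Real.sqrt (1 + (ki*|d t|)^2)) * |d t|
          = Vg * ki * ((ki * |d t|) / ((1 + (ki*|d t|)^2) * Real.sqrt (1 + (ki*|d t|)^2))) := by
            ring
        _ ≤ Vg * ki * (2/(3*Real.sqrt 3)) :=
            mul_le_mul_of_nonneg_left hb (by positivity)
        _ = Vg * (2 * ki / (3 * Real.sqrt 3)) := by ring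
        _ ≤ Vg * (κmax - c / Vg) :=
            mul_le_mul_of_nonneg_left (le_trans (le_max_left _ _) hfeas) hVg.le
    · -- i = 3
      subst hi hki
      have hki0 : 0 < ki := hk₃
      set K := ki ^ ((1:ℝ)/3) with hKdef
      have hK : 0 < K := Real.rpow_pos_of_pos hki0 _
      have hK3 : K ^ (3:ℕ) = ki := by
        rw [hKdef, ← Real.rpow_natCast (ki ^ ((1:ℝ)/3)) 3, ← Real.rpow_mul hki0.le]
        norm_num
      set u := K * |d t| with hudef
      have hu0 : 0 ≤ u := by positivity
      have hd6 : |d t| ^ 6 = d t ^ 6 := by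
        rw [← abs_pow]; exact abs_of_nonneg (by positivity)
      have hu6 : (ki * d t ^ 3)^2 = u^6 := by
        have h1 : u^6 = ki^2 * d t ^ 6 := by
          rw [hudef, mul_pow, hd6, ← hK3]; ring
        rw [h1]; ring
      have hT : T = -(Vg * (3 * ki^2) / (S * Real.sqrt S) * d t ^ 5) := by
        rw [hTdef]
        field_simp
        ring
      have habsT : |T| = Vg * (3 * ki^2) / (S * Real.sqrt S) * |d t|^5 := by
        rw [hT, abs_neg, abs_mul, abs_pow,
          abs_of_nonneg (by positivity : (0:ℝ) ≤ Vg * (3 * ki^2) / (S * Real.sqrt S))]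
      have hSeq : S = 1 + u^6 := by rw [hSdef, hu6]
      have hnum : ki^2 * |d t|^5 = K * u^5 := by rw [hudef, ← hK3]; ring
      have hb := lem3' u hu0
      rw [habsT, hSeq]
      calc Vg * (3 * ki^2) / ((1+u^6) * Real.sqrt (1+u^6)) * |d t|^5
          = Vg * K * (3 * u^5 / ((1+u^6) * Real.sqrt (1+u^6))) := by
            field_simp
            nlinarith [hnum]
        _ ≤ Vg * K * ((2:ℝ)^((4:ℝ)/3) * (5:ℝ)^((5:ℝ)/6) / 9) :=
            mul_le_mul_of_nonneg_left hb (by positivity)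
        _ = Vg * ((2:ℝ)^((4:ℝ)/3) * (5:ℝ)^((5:ℝ)/6) / 9 * K) := by ring
        _ ≤ Vg * (κmax - c / Vg) :=
            mul_le_mul_of_nonneg_left (le_trans (le_max_right _ _) hfeas) hVg.le
  have hfin : Vg * (κmax - c / Vg) = Vg * κmax - c := by
    field_simp
  linarith [habs, hkey]
end
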